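/- arXiv:1908.03551 — 3 statements merged into one kernel-verified Lean document; each statement's English description precedes it below -/
import Mathlib

section
/- The syntactic reorderable part and Brzozowski reordering derivative compute their semantic counterparts: for every regular expression E over Σ and every word u, ⟦R_u E⟧ = R_u ⟦E⟧ and ⟦D_u E⟧ = D^I_u ⟦E⟧. -/
open RegularExpression
open scoped Classical

universe u

variable {α : Type u}

/-- Two words are independent if every letter of the first is independent
of every letter of the second. -/
def WIndep (I : α → α → Prop) (u v : List α) : Prop :=
  ∀ a ∈ u, ∀ b ∈ v, I a b

/-- Trace equivalence: the least equivalence relation on words containing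
all pairs (x ++ [a,b] ++ y, x ++ [b,a] ++ y) with a I b. -/
inductive TrEq (I : α → α → Prop) : List α → List α → Prop
  | swap (x y : List α) {a b : α} : I a b → TrEq I (x ++ [a, b] ++ y) (x ++ [b, a] ++ y)
  | refl (u : List α) : TrEq I u u
  | symm {u v : List α} : TrEq I u v → TrEq I v u
  | trans {u v w : List α} : TrEq I u v → TrEq I v w → TrEq I u w

/-- Trace closure of a language. -/
def TrClosure (I : α → α → Prop) (L : Set (List α)) : Set (List α) :=
  {w | ∃ z ∈ L, TrEq I w z}

/-- u ⊲ z ⊳ v with exactly n blocks of u: there are nonempty words u₁,…,uₙ and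
words v₀,…,vₙ (with v₁,…,v_{n-1} nonempty) such that u = u₁⋯uₙ, v = v₀⋯vₙ,
z = v₀u₁v₁⋯uₙvₙ and vⱼ I uᵢ whenever j < i. -/
def ScatN (I : α → α → Prop) (n : ℕ) (u z v : List α) : Prop :=
  ∃ us vs : ℕ → List α,
    (∀ i, 1 ≤ i → i ≤ n → us i ≠ []) ∧
    (∀ j, 1 ≤ j → j ≤ n - 1 → vs j ≠ []) ∧
    u = ((List.range n).map (fun i => us (i + 1))).flatten ∧
    v = ((List.range (n + 1)).map vs).flatten ∧
    z = vs 0 ++ ((List.range n).map (fun i => us (i + 1) ++ vs (i + 1))).flatten ∧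
    (∀ i j, 1 ≤ i → i ≤ n → j < i → WIndep I (vs j) (us i))

/-- u ⊲ z ⊳ v -/
def Scat (I : α → α → Prop) (u z v : List α) : Prop :=
  ∃ n, ScatN I n u z v

/-- u ∼⊲ z ⊳ v -/
def EqScat (I : α → α → Prop) (u z v : List α) : Prop :=
  ∃ u', TrEq I u u' ∧ Scat I u' z v

/-- u ∼⊲ z ⊳∼ v -/
def EqScatEq (I : α → α → Prop) (u z v : List α) : Prop :=
  ∃ u' v', TrEq I u u' ∧ Scat I u' z v' ∧ TrEq I v' v

/-- u ∼⊲_N z ⊳∼ v : as EqScatEq, with the number of blocks bounded by N -/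
def EqScatEqLe (I : α → α → Prop) (N : ℕ) (u z v : List α) : Prop :=
  ∃ u' v', TrEq I u u' ∧ (∃ n ≤ N, ScatN I n u' z v') ∧ TrEq I v' v

/-- Reordering concatenation of words. -/
def rconc (I : α → α → Prop) : List α → List α → Set (List α)
  | [], v => {v}
  | a :: u, [] => {a :: u}
  | a :: u, b :: v =>
      (List.cons a) '' rconc I u (b :: v) ∪
      {z | WIndep I (a :: u) [b] ∧ ∃ w ∈ rconc I (a :: u) v, z = b :: w}
termination_by u v => u.length + v.length

/-- Reordering concatenation lifted to languages. -/
def rconcL (I : α → α → Prop) (L L' : Set (List α)) : Set (List α) :=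
  {z | ∃ u ∈ L, ∃ v ∈ L', z ∈ rconc I u v}

/-- The reorderable part of a language w.r.t. a word. -/
def RPart (I : α → α → Prop) (u : List α) (L : Set (List α)) : Set (List α) :=
  {v ∈ L | WIndep I v u}

/-- The reordering derivative of a language along a word. -/
def RDeriv (I : α → α → Prop) (u : List α) (L : Set (List α)) : Set (List α) :=
  {v | ∃ z ∈ L, EqScat I u z v}

/-- Syntactic reorderable part of a regexp w.r.t. a letter. -/
noncomputable def Rexp (I : α → α → Prop) (a : α) : RegularExpression α → RegularExpression α
  | zero => zero
  | epsilon => epsilon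
  | char b => if I a b then char b else zero
  | plus E F => plus (Rexp I a E) (Rexp I a F)
  | comp E F => comp (Rexp I a E) (Rexp I a F)
  | RegularExpression.star E => star (Rexp I a E)

/-- Brzozowski reordering derivative of a regexp along a letter. -/
noncomputable def Dexp (I : α → α → Prop) (a : α) : RegularExpression α → RegularExpression α
  | zero => zero
  | epsilon => zero
  | char b => if a = b then epsilon else zero
  | plus E F => plus (Dexp I a E) (Dexp I a F)
  | comp E F => plus (comp (Dexp I a E) F) (comp (Rexp I a E) (Dexp I a F))
  | RegularExpression.star E => comp (star (Rexp I a E)) (comp (Dexp I a E) (star E))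

/-- Syntactic reorderable part along a word. -/
noncomputable def RexpW (I : α → α → Prop) (u : List α) (E : RegularExpression α) :
    RegularExpression α :=
  u.foldl (fun E a => Rexp I a E) E

/-- Brzozowski reordering derivative along a word. -/
noncomputable def DexpW (I : α → α → Prop) (u : List α) (E : RegularExpression α) :
    RegularExpression α :=
  u.foldl (fun E a => Dexp I a E) E

/-- Antimirov reordering parts-of-derivatives along a letter. -/
inductive Antim (I : α → α → Prop) : RegularExpression α → α → RegularExpression α → Prop
  | chr (a : α) : Antim I (char a) a epsilon
  | plusL {E F : RegularExpression α} {a E'} : Antim I E a E' → Antim I (plus E F) a E'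
  | plusR {E F : RegularExpression α} {a F'} : Antim I F a F' → Antim I (plus E F) a F'
  | compL {E F : RegularExpression α} {a E'} : Antim I E a E' → Antim I (comp E F) a (comp E' F)
  | compR {E F : RegularExpression α} {a F'} :
      Antim I F a F' → Antim I (comp E F) a (comp (Rexp I a E) F')
  | st {E : RegularExpression α} {a E'} :
      Antim I E a E' → Antim I (star E) a (comp (star (Rexp I a E)) (comp E' (star E)))

/-- Antimirov reordering parts-of-derivatives along a word. -/
inductive AntimW (I : α → α → Prop) : RegularExpression α → List α → RegularExpression α → Prop
  | nil (E : RegularExpression α) : AntimW I E [] E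
  | snoc {E : RegularExpression α} {u E' a E''} :
      AntimW I E u E' → Antim I E' a E'' → AntimW I E (u ++ [a]) E''

/-- The dependence graph of a word: vertices are positions; distinct positions
are adjacent when their letters are not independent. -/
def depGraph (I : α → α → Prop) (w : List α) : SimpleGraph (Fin w.length) where
  Adj i j := i ≠ j ∧ ¬(I (w.get i) (w.get j) ∧ I (w.get j) (w.get i))
  symm := by
    constructor
    intro i j h
    exact ⟨h.1.symm, fun hc => h.2 ⟨hc.2, hc.1⟩⟩
  loopless := by
    constructor
    intro i h
    exact h.1 rfl

/-- A word is connected if its dependence graph is connected. -/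
def WordConnected (I : α → α → Prop) (w : List α) : Prop :=
  (depGraph I w).Preconnected

/-- Least fixed point star for the trace-closing semantics. -/
def starI (I : α → α → Prop) (L : Set (List α)) : Set (List α) :=
  sInf {X | {([] : List α)} ∪ rconcL I L X ⊆ X}

/-- Trace-closing semantics of regular expressions. -/
def langI (I : α → α → Prop) : RegularExpression α → Set (List α)
  | zero => ∅
  | epsilon => {[]}
  | char a => {[a]}
  | plus E F => langI I E ∪ langI I F
  | comp E F => rconcL I (langI I E) (langI I F)
  | RegularExpression.star E => starI I (langI I E)

/-- L has (scattering) rank at most N. -/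
def HasRankLe (I : α → α → Prop) (L : Set (List α)) (N : ℕ) : Prop :=
  ∀ u v, u ++ v ∈ TrClosure I L → ∃ z ∈ L, EqScatEqLe I N u z v

/-- L has uniform (scattering) rank at most N. -/
def HasUniformRankLe (I : α → α → Prop) (L : Set (List α)) (N : ℕ) : Prop :=
  ∀ w ∈ TrClosure I L, ∃ z ∈ L, ∀ u v, w = u ++ v → EqScatEqLe I N u z v

/-- Star-connected regular expressions. -/
inductive StarConnected (I : α → α → Prop) : RegularExpression α → Prop
  | zero : StarConnected I zero
  | epsilon : StarConnected I epsilon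
  | chr (a : α) : StarConnected I (char a)
  | plus {E F : RegularExpression α} :
      StarConnected I E → StarConnected I F → StarConnected I (plus E F)
  | comp {E F : RegularExpression α} :
      StarConnected I E → StarConnected I F → StarConnected I (comp E F)
  | st {E : RegularExpression α} :
      StarConnected I E → (∀ w ∈ E.matches', WordConnected I w) → StarConnected I (star E)

/-- Refined Antimirov reordering parts-of-derivatives along a letter. -/
inductive RAntim (I : α → α → Prop) :
    RegularExpression α → α → RegularExpression α → RegularExpression α → Prop
  | chr (a : α) : RAntim I (char a) a epsilon epsilon
  | plusL {E F : RegularExpression α} {a El Er} :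
      RAntim I E a El Er → RAntim I (plus E F) a El Er
  | plusR {E F : RegularExpression α} {a Fl Fr} :
      RAntim I F a Fl Fr → RAntim I (plus E F) a Fl Fr
  | compL {E F : RegularExpression α} {a El Er} :
      RAntim I E a El Er → RAntim I (comp E F) a El (comp Er F)
  | compR {E F : RegularExpression α} {a Fl Fr} :
      RAntim I F a Fl Fr → RAntim I (comp E F) a (comp (Rexp I a E) Fl) Fr
  | st {E : RegularExpression α} {a El Er} :
      RAntim I E a El Er →
      RAntim I (star E) a (comp (star (Rexp I a E)) El) (comp Er (star E))

/-- Refined Antimirov relation lifted to nonempty lists of regexps (unbounded). -/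
inductive RAntimL (I : α → α → Prop) :
    List (RegularExpression α) → α → List (RegularExpression α) → Prop
  | split {Γ Δ : List (RegularExpression α)} {E : RegularExpression α} {a El Er} :
      RAntim I E a El Er →
      RAntimL I (Γ ++ E :: Δ) a (Γ.map (Rexp I a) ++ El :: Er :: Δ)
  | dropL {Γ Δ : List (RegularExpression α)} {E : RegularExpression α} {a El Er} :
      RAntim I E a El Er → [] ∈ El.matches' → Γ ≠ [] →
      RAntimL I (Γ ++ E :: Δ) a (Γ.map (Rexp I a) ++ Er :: Δ)
  | dropR {Γ Δ : List (RegularExpression α)} {E : RegularExpression α} {a El Er} :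
      RAntim I E a El Er → [] ∈ Er.matches' → Δ ≠ [] →
      RAntimL I (Γ ++ E :: Δ) a (Γ.map (Rexp I a) ++ El :: Δ)
  | dropBoth {Γ Δ : List (RegularExpression α)} {E : RegularExpression α} {a El Er} :
      RAntim I E a El Er → [] ∈ El.matches' → [] ∈ Er.matches' → Γ ≠ [] → Δ ≠ [] →
      RAntimL I (Γ ++ E :: Δ) a (Γ.map (Rexp I a) ++ Δ)

/-- Refined Antimirov relation along a word (unbounded). -/
inductive RAntimW (I : α → α → Prop) :
    RegularExpression α → List α → List (RegularExpression α) → Prop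
  | nil (E : RegularExpression α) : RAntimW I E [] [E]
  | snoc {E : RegularExpression α} {u Γ a Γ'} :
      RAntimW I E u Γ → RAntimL I Γ a Γ' → RAntimW I E (u ++ [a]) Γ'

/-- N-bounded refined Antimirov relation lifted to nonempty lists of regexps. -/
inductive RAntimLN (I : α → α → Prop) (N : ℕ) :
    List (RegularExpression α) → α → List (RegularExpression α) → Prop
  | split {Γ Δ : List (RegularExpression α)} {E : RegularExpression α} {a El Er} :
      RAntim I E a El Er → Γ.length + Δ.length < N →
      RAntimLN I N (Γ ++ E :: Δ) a (Γ.map (Rexp I a) ++ El :: Er :: Δ)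
  | dropL {Γ Δ : List (RegularExpression α)} {E : RegularExpression α} {a El Er} :
      RAntim I E a El Er → [] ∈ El.matches' → Γ ≠ [] →
      RAntimLN I N (Γ ++ E :: Δ) a (Γ.map (Rexp I a) ++ Er :: Δ)
  | dropR {Γ Δ : List (RegularExpression α)} {E : RegularExpression α} {a El Er} :
      RAntim I E a El Er → [] ∈ Er.matches' → Δ ≠ [] →
      RAntimLN I N (Γ ++ E :: Δ) a (Γ.map (Rexp I a) ++ El :: Δ)
  | dropBoth {Γ Δ : List (RegularExpression α)} {E : RegularExpression α} {a El Er} :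
      RAntim I E a El Er → [] ∈ El.matches' → [] ∈ Er.matches' → Γ ≠ [] → Δ ≠ [] →
      RAntimLN I N (Γ ++ E :: Δ) a (Γ.map (Rexp I a) ++ Δ)

/-- N-bounded refined Antimirov relation along a word. -/
inductive RAntimWN (I : α → α → Prop) (N : ℕ) :
    RegularExpression α → List α → List (RegularExpression α) → Prop
  | nil (E : RegularExpression α) : RAntimWN I N E [] [E]
  | snoc {E : RegularExpression α} {u Γ a Γ'} :
      RAntimWN I N E u Γ → RAntimLN I N Γ a Γ' → RAntimWN I N E (u ++ [a]) Γ'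


/- ===================== Auxiliary development for stmt7 ===================== -/

section Stmt7Aux

variable {α : Type u} {I : α → α → Prop}

/-- Inductive characterization of scattering: `Sc I u z v` means the letters of `z`
can be 2-colored into `u`-letters and `v`-letters (in order), such that every
`v`-letter is independent of every later `u`-letter. -/
inductive Sc (I : α → α → Prop) : List α → List α → List α → Prop
  | base (v : List α) : Sc I [] v v
  | consU {u z v : List α} (a : α) : Sc I u z v → Sc I (a :: u) (a :: z) v
  | consV {u z v : List α} {b : α} : (∀ c ∈ u, I b c) → Sc I u z v →
      Sc I u (b :: z) (b :: v)

lemma Sc.appendU {u z v : List α} (w : List α) (h : Sc I u z v) :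
    Sc I (w ++ u) (w ++ z) v := by
  induction w with
  | nil => simpa using h
  | cons a w ih => exact Sc.consU a ih

lemma Sc.appendV {u z v : List α} (w : List α) (hw : ∀ b ∈ w, ∀ c ∈ u, I b c)
    (h : Sc I u z v) : Sc I u (w ++ z) (w ++ v) := by
  induction w with
  | nil => simpa using h
  | cons b w ih =>
      exact Sc.consV (hw b (List.mem_cons_self))
        (ih fun b' hb' => hw b' (List.mem_cons_of_mem _ hb'))

lemma sc_nil_aux {u z v : List α} (h : Sc I u z v) : u = [] → z = v := by
  induction h with
  | base v => intro _; rfl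
  | consU a h ih => intro hc; exact absurd hc (by simp)
  | consV hb h ih => intro hu; rw [ih hu]

lemma flatten_range_succ (f : ℕ → List α) (n : ℕ) :
    ((List.range (n+1)).map f).flatten
      = f 0 ++ ((List.range n).map fun i => f (i+1)).flatten := by
  rw [List.range_succ_eq_map, List.map_cons, List.flatten_cons, List.map_map]
  rfl

lemma scatN_sc : ∀ n {u z v : List α}, ScatN I n u z v → Sc I u z v := by
  intro n
  induction n with
  | zero =>
      rintro u z v ⟨us, vs, -, -, hu, hv, hz, -⟩
      simp only [List.range_zero, List.map_nil, List.flatten_nil] at hu hz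
      rw [flatten_range_succ] at hv
      simp only [List.range_zero, List.map_nil, List.flatten_nil, List.append_nil] at hv hz
      subst hu
      rw [hv, hz]
      exact Sc.base _
  | succ n ih =>
      rintro u z v ⟨us, vs, hune, hvne, hu, hv, hz, hind⟩
      have hsub : Sc I (((List.range n).map fun i => us (i+2)).flatten)
          (vs 1 ++ ((List.range n).map fun i => us (i+2) ++ vs (i+2)).flatten)
          (((List.range (n+1)).map fun j => vs (j+1)).flatten) :=
        ih ⟨fun i => us (i+1), fun j => vs (j+1),
          fun i h1 h2 => hune (i+1) (by omega) (by omega),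
          fun j h1 h2 => hvne (j+1) (by omega) (by omega),
          rfl, rfl, rfl,
          fun i j h1 h2 hji => hind (i+1) (j+1) (by omega) (by omega) (by omega)⟩
      have hcond : ∀ b ∈ vs 0,
          ∀ c ∈ us 1 ++ ((List.range n).map fun i => us (i+2)).flatten, I b c := by
        intro b hb c hc
        rcases List.mem_append.1 hc with h | h
        · exact hind 1 0 (by omega) (by omega) (by omega) b hb c h
        · obtain ⟨l, hl, hcl⟩ := List.mem_flatten.1 h
          obtain ⟨i, hi, rfl⟩ := List.mem_map.1 hl
          have hin : i < n := List.mem_range.1 hi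
          exact hind (i+2) 0 (by omega) (by omega) (by omega) b hb c hcl
      have hfin := Sc.appendV (vs 0) hcond (Sc.appendU (us 1) hsub)
      rw [hu, hv, hz]
      simp only [flatten_range_succ, List.append_assoc]
      simp only [flatten_range_succ, List.append_assoc] at hfin
      exact hfin

lemma sc_scatN {u z v : List α} (h : Sc I u z v) : ∃ n, ScatN I n u z v := by
  induction h with
  | base v =>
      refine ⟨0, fun _ => [], fun _ => v, ?_, ?_, ?_, ?_, ?_, ?_⟩
      · intro i h1 h2; exact absurd (h1.trans h2) (by omega)
      · intro j h1 h2; exact absurd (h1.trans h2) (by omega)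
      · simp
      · rw [flatten_range_succ]; simp
      · simp
      · intro i j h1 h2 _; exact absurd (h1.trans h2) (by omega)
  | @consV u z v b hb h ih =>
      obtain ⟨n, us, vs, hune, hvne, hu, hv, hz, hind⟩ := ih
      refine ⟨n, us, fun j => match j with | 0 => b :: vs 0 | (k+1) => vs (k+1),
        hune, ?_, hu, ?_, ?_, ?_⟩
      · intro j h1 h2
        rcases j with _ | k
        · exact absurd h1 (by omega)
        · exact hvne (k+1) h1 h2
      · rw [flatten_range_succ] at hv ⊢
        exact congrArg (b :: ·) hv
      · exact congrArg (b :: ·) hz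
      · intro i j h1 h2 hji
        rcases j with _ | k
        · intro x hx y hy
          rcases List.mem_cons.1 hx with rfl | hx'
          · refine hb y ?_
            rw [hu]
            exact List.mem_flatten.2 ⟨us i, List.mem_map.2 ⟨i-1, List.mem_range.2 (by omega),
              congrArg us (by omega)⟩, hy⟩
          · exact hind i 0 h1 h2 (by omega) x hx' y hy
        · exact hind i (k+1) h1 h2 hji
  | @consU u z v a h ih =>
      obtain ⟨n, us, vs, hune, hvne, hu, hv, hz, hind⟩ := ih
      by_cases hcase : vs 0 = [] ∧ n ≠ 0
      · obtain ⟨hvs0, hn⟩ := hcase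
        obtain ⟨m, rfl⟩ : ∃ m, n = m + 1 := ⟨n - 1, by omega⟩
        refine ⟨m + 1, fun i => match i with | 0 => [] | 1 => a :: us 1 | (k+2) => us (k+2),
          vs, ?_, hvne, ?_, hv, ?_, ?_⟩
        · intro i h1 h2
          rcases i with _ | _ | k
          · exact absurd h1 (by omega)
          · exact List.cons_ne_nil _ _
          · exact hune (k+2) (by omega) h2
        · rw [flatten_range_succ] at hu ⊢
          exact congrArg (a :: ·) hu
        · rw [flatten_range_succ] at hz ⊢
          rw [hvs0] at hz ⊢
          simp only [List.nil_append] at hz ⊢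
          exact congrArg (a :: ·) hz
        · intro i j h1 h2 hji
          rcases i with _ | _ | k
          · exact absurd h1 (by omega)
          · have hj : j = 0 := by omega
            subst hj
            intro x hx
            rw [hvs0] at hx
            exact absurd hx (List.not_mem_nil)
          · exact hind (k+2) j h1 h2 hji
      · rw [not_and_or, not_not] at hcase
        refine ⟨n + 1, fun i => match i with | 0 => [] | 1 => [a] | (k+2) => us (k+1),
          fun j => match j with | 0 => [] | (k+1) => vs k, ?_, ?_, ?_, ?_, ?_, ?_⟩
        · intro i h1 h2
          rcases i with _ | _ | k
          · exact absurd h1 (by omega)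
          · exact List.cons_ne_nil _ _
          · exact hune (k+1) (by omega) (by omega)
        · intro j h1 h2
          rcases j with _ | k
          · exact absurd h1 (by omega)
          · rcases k with _ | k'
            · rcases hcase with h' | h'
              · exact h'
              · subst h'; exact absurd h2 (by omega)
            · exact hvne (k'+1) (by omega) (by omega)
        · rw [flatten_range_succ]
          exact congrArg (a :: ·) hu
        · rw [flatten_range_succ]
          exact hv
        · rw [flatten_range_succ]
          exact congrArg (a :: ·) hz
        · intro i j h1 h2 hji
          rcases j with _ | k
          · intro x hx
            exact absurd hx (List.not_mem_nil)
          · rcases i with _ | _ | k'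
            · exact absurd h1 (by omega)
            · exact absurd hji (by omega)
            · exact hind (k'+1) k (by omega) (by omega) (by omega)

lemma scat_iff_sc {u z v : List α} : Scat I u z v ↔ Sc I u z v :=
  ⟨fun ⟨n, h⟩ => scatN_sc n h, fun h => sc_scatN h⟩

lemma TrEq.length_eq {u v : List α} (h : TrEq I u v) : u.length = v.length := by
  induction h with
  | swap x y hI => simp
  | refl u => rfl
  | symm h ih => omega
  | trans h1 h2 ih1 ih2 => omega

lemma TrEq.eq_of_short {u v : List α} (h : TrEq I u v) (hu : u.length ≤ 1) : u = v := by
  induction h with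
  | swap x y hI => exfalso; simp only [List.length_append, List.length_cons] at hu; omega
  | refl u => rfl
  | symm h ih =>
      have : _ = _ := h.length_eq
      exact (ih (by omega)).symm
  | trans h1 h2 ih1 ih2 =>
      have e1 := ih1 hu
      have : _ = _ := h1.length_eq
      exact e1.trans (ih2 (by omega))

lemma TrEq.append_right {u v : List α} (w : List α) (h : TrEq I u v) :
    TrEq I (u ++ w) (v ++ w) := by
  induction h with
  | swap x y hI => simpa [List.append_assoc] using TrEq.swap x (y ++ w) hI
  | refl u => exact .refl _
  | symm h ih => exact ih.symm
  | trans h1 h2 ih1 ih2 => exact ih1.trans ih2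

lemma TrEq.append_left {u v : List α} (w : List α) (h : TrEq I u v) :
    TrEq I (w ++ u) (w ++ v) := by
  induction h with
  | swap x y hI => simpa [List.append_assoc] using TrEq.swap (w ++ x) y hI
  | refl u => exact .refl _
  | symm h ih => exact ih.symm
  | trans h1 h2 ih1 ih2 => exact ih1.trans ih2

lemma TrEq.cons {u v : List α} (c : α) (h : TrEq I u v) : TrEq I (c :: u) (c :: v) := by
  simpa using h.append_left [c]

lemma treq_snoc {a : α} : ∀ {s : List α}, (∀ d ∈ s, I d a) → TrEq I (s ++ [a]) (a :: s) := by
  intro s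
  induction s with
  | nil => intro _; exact .refl _
  | cons d s ih =>
      intro h
      have h1 : TrEq I (d :: (s ++ [a])) (d :: (a :: s)) :=
        (ih fun x hx => h x (List.mem_cons_of_mem _ hx)).cons d
      have h2 : TrEq I (d :: a :: s) (a :: d :: s) := by
        simpa using TrEq.swap ([] : List α) s (h d (List.mem_cons_self))
      exact h1.trans h2

lemma occ_swap (hsym : Symmetric I) {l r : List α} {a b : α} (hI : I a b)
    {p s : List α} {c : α} (hx : l ++ [a, b] ++ r = p ++ c :: s)
    (hs : ∀ d ∈ s, I c d) :
    ∃ p' s', l ++ [b, a] ++ r = p' ++ c :: s' ∧ (∀ d ∈ s', I c d) ∧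
      TrEq I (p ++ s) (p' ++ s') := by
  rw [List.append_assoc] at hx
  rcases List.append_eq_append_iff.1 hx with ⟨t, hp, hts⟩ | ⟨t, hl, hts⟩
  · -- p = l ++ t,  [a,b] ++ r = t ++ c :: s
    subst hp
    rcases t with _ | ⟨x, t2⟩
    · -- t = [] : c = a, s = b :: r
      simp only [List.nil_append] at hts
      injection hts with h1 h2
      subst h1
      subst h2
      refine ⟨l ++ [b], r, by simp, fun d hd => hs d (List.mem_cons_of_mem _ hd), ?_⟩
      simpa [List.append_assoc] using TrEq.refl (I := I) (l ++ b :: r)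
    · rcases t2 with _ | ⟨y, t3⟩
      · -- t = [a] : c = b, s = r
        simp only [List.cons_append, List.nil_append] at hts
        injection hts with h1 hts; injection hts with h2 h3
        subst h1; subst h2; subst h3
        refine ⟨l, a :: r, by simp, ?_, ?_⟩
        · intro d hd
          rcases List.mem_cons.1 hd with rfl | hd'
          · exact hsym hI
          · exact hs d hd'
        · simpa [List.append_assoc] using TrEq.refl (I := I) (l ++ a :: r)
      · -- t = a :: b :: t3 : r = t3 ++ c :: s
        simp only [List.cons_append, List.nil_append] at hts
        injection hts with h1 hts; injection hts with h2 h3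
        subst h1; subst h2; subst h3
        refine ⟨l ++ b :: a :: t3, s, by simp, hs, ?_⟩
        have := TrEq.swap (I := I) l (t3 ++ s) hI
        simpa [List.append_assoc] using this
  · -- l = p ++ t,  c :: s = t ++ [a,b] ++ r
    subst hl
    rcases t with _ | ⟨x, t'⟩
    · -- t = [] : c = a, s = b :: r  (same as before)
      simp only [List.nil_append] at hts
      injection hts with h1 h2
      subst h1
      subst h2
      refine ⟨p ++ [b], r, by simp, fun d hd => hs d (List.mem_cons_of_mem _ hd), ?_⟩
      simpa [List.append_assoc] using TrEq.refl (I := I) (p ++ b :: r)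
    · -- t = c :: t' : s = t' ++ [a,b] ++ r
      simp only [List.cons_append, List.nil_append] at hts
      injection hts with h1 h2
      subst h1
      subst h2
      refine ⟨p, t' ++ [b, a] ++ r, by simp [List.append_assoc], ?_, ?_⟩
      · intro d hd
        apply hs
        simp only [List.append_assoc, List.mem_append, List.mem_cons] at hd ⊢
        tauto
      · have := TrEq.swap (I := I) (p ++ t') r hI
        simpa [List.append_assoc] using this

lemma trEq_occ (hsym : Symmetric I) {x y : List α} (h : TrEq I x y) :
    (∀ p c s, x = p ++ c :: s → (∀ d ∈ s, I c d) →
      ∃ p' s', y = p' ++ c :: s' ∧ (∀ d ∈ s', I c d) ∧ TrEq I (p ++ s) (p' ++ s')) ∧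
    (∀ p c s, y = p ++ c :: s → (∀ d ∈ s, I c d) →
      ∃ p' s', x = p' ++ c :: s' ∧ (∀ d ∈ s', I c d) ∧ TrEq I (p ++ s) (p' ++ s')) := by
  induction h with
  | swap l r hI =>
      constructor
      · intro p c s hx hs
        exact occ_swap hsym hI hx hs
      · intro p c s hx hs
        exact occ_swap hsym (hsym hI) hx hs
  | refl u =>
      exact ⟨fun p c s h hs => ⟨p, s, h, hs, .refl _⟩,
             fun p c s h hs => ⟨p, s, h, hs, .refl _⟩⟩
  | symm h ih => exact ⟨ih.2, ih.1⟩
  | trans h1 h2 ih1 ih2 =>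
      constructor
      · intro p c s hx hs
        obtain ⟨p', s', hy, hs', ht⟩ := ih1.1 p c s hx hs
        obtain ⟨p'', s'', hz, hs'', ht'⟩ := ih2.1 p' c s' hy hs'
        exact ⟨p'', s'', hz, hs'', ht.trans ht'⟩
      · intro p c s hx hs
        obtain ⟨p', s', hy, hs', ht⟩ := ih2.2 p c s hx hs
        obtain ⟨p'', s'', hz, hs'', ht'⟩ := ih1.2 p' c s' hy hs'
        exact ⟨p'', s'', hz, hs'', ht.trans ht'⟩

lemma sc_extract {u z v : List α} (h : Sc I u z v) :
    ∀ p (a : α) s, u = p ++ a :: s → (∀ d ∈ s, I a d) →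
      ∃ v0 v1, v = v0 ++ v1 ∧ Sc I (p ++ s) z (v0 ++ a :: v1) ∧ ∀ c ∈ v0, I c a := by
  induction h with
  | base v =>
      intro p a s hp hs
      exact absurd hp (by simp)
  | @consU u z v e h ih =>
      intro p a s hp hs
      cases p with
      | nil =>
          simp only [List.nil_append] at hp
          injection hp with h1 h2
          subst h1; subst h2
          exact ⟨[], v, rfl, Sc.consV hs h, by simp⟩
      | cons f p' =>
          rw [List.cons_append] at hp
          injection hp with h1 h2
          subst h1
          obtain ⟨v0, v1, hv, hsc, hcc⟩ := ih p' a s h2 hs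
          exact ⟨v0, v1, hv, Sc.consU _ hsc, hcc⟩
  | @consV u z v b hb h ih =>
      intro p a s hp hs
      obtain ⟨v0, v1, hv, hsc, hcc⟩ := ih p a s hp hs
      have hb' : ∀ c ∈ p ++ s, I b c := by
        intro c hcm
        apply hb
        rw [hp]
        rcases List.mem_append.1 hcm with h' | h'
        · exact List.mem_append_left _ h'
        · exact List.mem_append_right _ (List.mem_cons_of_mem _ h')
      refine ⟨b :: v0, v1, congrArg (b :: ·) hv, Sc.consV hb' hsc, ?_⟩
      intro c hcm
      rcases List.mem_cons.1 hcm with rfl | h'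
      · apply hb
        rw [hp]
        exact List.mem_append_right _ (List.mem_cons_self)
      · exact hcc c h'

lemma sc_insert {u z v : List α} (h : Sc I u z v) :
    ∀ (a : α) v0 v1, v = v0 ++ a :: v1 → (∀ c ∈ v0, I c a) →
      ∃ p s, u = p ++ s ∧ (∀ d ∈ s, I a d) ∧ Sc I (p ++ a :: s) z (v0 ++ v1) := by
  induction h with
  | base v =>
      intro a v0 v1 hv h0
      subst hv
      refine ⟨[], [], rfl, by simp, ?_⟩
      exact Sc.appendV v0
        (fun b hb c hcm => by
          rcases List.mem_cons.1 hcm with rfl | h'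
          · exact h0 b hb
          · exact absurd h' (List.not_mem_nil))
        (Sc.consU a (Sc.base v1))
  | @consU u z v e h ih =>
      intro a v0 v1 hv h0
      obtain ⟨p, s, hu, hds, hsc⟩ := ih a v0 v1 hv h0
      subst hu
      exact ⟨e :: p, s, rfl, hds, Sc.consU e hsc⟩
  | @consV u z v b hb h ih =>
      intro a v0 v1 hv h0
      cases v0 with
      | nil =>
          simp only [List.nil_append] at hv
          injection hv with h1 h2
          subst h1; subst h2
          exact ⟨[], u, rfl, hb, Sc.consU b h⟩
      | cons c v0' =>
          rw [List.cons_append] at hv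
          injection hv with h1 h2
          subst h1
          obtain ⟨p, s, hu, hds, hsc⟩ := ih a v0' v1 h2
            (fun d hd => h0 d (List.mem_cons_of_mem _ hd))
          refine ⟨p, s, hu, hds, ?_⟩
          have hb2 : ∀ d ∈ p ++ a :: s, I b d := by
            intro d hd
            rcases List.mem_append.1 hd with h' | h'
            · exact hb d (by rw [hu]; exact List.mem_append_left _ h')
            · rcases List.mem_cons.1 h' with rfl | h''
              · exact h0 _ (List.mem_cons_self)
              · exact hb d (by rw [hu]; exact List.mem_append_right _ h'')
          exact Sc.consV hb2 hsc


/-! ### Semantic derivative along a letter -/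

/-- Semantic letter derivative. -/
def Da (I : α → α → Prop) (a : α) (L : Set (List α)) : Set (List α) :=
  {v | ∃ v0 v1, v0 ++ a :: v1 ∈ L ∧ v = v0 ++ v1 ∧ ∀ c ∈ v0, I c a}

lemma mem_rderiv {L : Set (List α)} {u v : List α} :
    v ∈ RDeriv I u L ↔ ∃ z ∈ L, ∃ u', TrEq I u u' ∧ Sc I u' z v := by
  constructor
  · rintro ⟨z, hz, u', ht, hs⟩
    exact ⟨z, hz, u', ht, scat_iff_sc.1 hs⟩
  · rintro ⟨z, hz, u', ht, hs⟩
    exact ⟨z, hz, u', ht, scat_iff_sc.2 hs⟩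

lemma rderiv_nil (L : Set (List α)) : RDeriv I [] L = L := by
  ext v
  rw [mem_rderiv]
  constructor
  · rintro ⟨z, hz, u', ht, hs⟩
    obtain rfl := (ht.eq_of_short (by simp)).symm
    rwa [sc_nil_aux hs rfl] at hz
  · intro hv
    exact ⟨v, hv, [], .refl _, Sc.base v⟩

lemma sc_single_iff {a : α} {z v : List α} :
    Sc I [a] z v ↔ ∃ v0 v1, z = v0 ++ a :: v1 ∧ v = v0 ++ v1 ∧ ∀ c ∈ v0, I c a := by
  constructor
  · intro h
    obtain ⟨v0, v1, hv, hs, hc⟩ := sc_extract h [] a [] rfl (by simp)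
    exact ⟨v0, v1, sc_nil_aux hs rfl, hv, hc⟩
  · rintro ⟨v0, v1, rfl, rfl, hc⟩
    exact Sc.appendV v0
      (fun b hb c hcm => by
        rcases List.mem_cons.1 hcm with rfl | h'
        · exact hc b hb
        · exact absurd h' (List.not_mem_nil))
      (Sc.consU a (Sc.base v1))

lemma rderiv_single (a : α) (L : Set (List α)) : RDeriv I [a] L = Da I a L := by
  ext v
  rw [mem_rderiv]
  constructor
  · rintro ⟨z, hz, u', ht, hs⟩
    obtain rfl := (ht.eq_of_short (by simp)).symm
    obtain ⟨v0, v1, hzz, hvv, hc⟩ := sc_single_iff.1 hs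
    exact ⟨v0, v1, hzz ▸ hz, hvv, hc⟩
  · rintro ⟨v0, v1, hz, hv, hc⟩
    exact ⟨v0 ++ a :: v1, hz, [a], .refl _, sc_single_iff.2 ⟨v0, v1, rfl, hv, hc⟩⟩

lemma rderiv_snoc (hsym : Symmetric I) (u : List α) (a : α) (L : Set (List α)) :
    RDeriv I (u ++ [a]) L = Da I a (RDeriv I u L) := by
  ext v
  rw [mem_rderiv]
  constructor
  · rintro ⟨z, hz, u'', ht, hs⟩
    obtain ⟨p, s, rfl, hps, ht2⟩ := (trEq_occ hsym ht).1 u a [] rfl (by simp)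
    obtain ⟨v0, v1, rfl, hs2, hc⟩ := sc_extract hs p a s rfl hps
    refine ⟨v0, v1, ?_, rfl, hc⟩
    rw [mem_rderiv]
    exact ⟨z, hz, p ++ s, by simpa using ht2, hs2⟩
  · rintro ⟨v0, v1, hw, rfl, hc⟩
    rw [mem_rderiv] at hw
    obtain ⟨z, hz, u', ht, hs⟩ := hw
    obtain ⟨p, s, rfl, hds, hs2⟩ := sc_insert hs a v0 v1 rfl hc
    refine ⟨z, hz, p ++ a :: s, ?_, hs2⟩
    have h1 : TrEq I (u ++ [a]) ((p ++ s) ++ [a]) := ht.append_right [a]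
    have h2 : TrEq I (p ++ (s ++ [a])) (p ++ a :: s) :=
      TrEq.append_left p (treq_snoc (fun d hd => hsym (hds d hd)))
    exact h1.trans (by simpa [List.append_assoc] using h2)

/-! ### Reorderable part: regex-level correctness -/

lemma rpart_nil (L : Set (List α)) : RPart I [] L = L := by
  ext v
  exact ⟨fun h => h.1, fun h => ⟨h, fun c hc b hb => absurd hb (List.not_mem_nil)⟩⟩

lemma rpart_snoc (u : List α) (a : α) (L : Set (List α)) :
    RPart I (u ++ [a]) L = RPart I [a] (RPart I u L) := by
  ext v
  constructor
  · rintro ⟨h1, h2⟩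
    exact ⟨⟨h1, fun c hc b hb => h2 c hc b (List.mem_append_left _ hb)⟩,
      fun c hc b hb => h2 c hc b (List.mem_append_right _ hb)⟩
  · rintro ⟨⟨h1, h2⟩, h3⟩
    refine ⟨h1, fun c hc b hb => ?_⟩
    rcases List.mem_append.1 hb with h' | h'
    · exact h2 c hc b h'
    · exact h3 c hc b h'

lemma rexp_correct (hsym : Symmetric I) (a : α) (E : RegularExpression α) :
    (Rexp I a E).matches' = RPart I [a] E.matches' := by
  induction E with
  | zero =>
      ext v
      exact ⟨fun h => h.elim, fun h => h.1.elim⟩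
  | epsilon =>
      ext v
      constructor
      · intro h
        have hv : v = [] := h
        refine ⟨h, ?_⟩
        subst hv
        intro c hc
        exact absurd hc (List.not_mem_nil)
      · exact fun h => h.1
  | char b =>
      ext v
      simp only [Rexp]
      by_cases hab : I a b
      · rw [if_pos hab]
        constructor
        · intro h
          have hv : v = [b] := h
          refine ⟨h, ?_⟩
          subst hv
          intro c hc d hd
          rcases List.mem_cons.1 hc with rfl | hc'
          · rcases List.mem_cons.1 hd with rfl | hd'
            · exact hsym hab
            · exact absurd hd' (List.not_mem_nil)
          · exact absurd hc' (List.not_mem_nil)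
        · exact fun h => h.1
      · rw [if_neg hab]
        constructor
        · intro h
          exact h.elim
        · rintro ⟨h1, h2⟩
          have hv : v = [b] := h1
          subst hv
          exact absurd (hsym (h2 b (List.mem_cons_self) a (List.mem_cons_self))) hab
  | plus E F ihE ihF =>
      ext v
      simp only [Rexp]
      constructor
      · intro h
        rcases (Language.mem_add _ _ v).1 h with h' | h'
        · rw [ihE] at h'
          exact ⟨(Language.mem_add _ _ v).2 (Or.inl h'.1), h'.2⟩
        · rw [ihF] at h'
          exact ⟨(Language.mem_add _ _ v).2 (Or.inr h'.1), h'.2⟩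
      · rintro ⟨h1, h2⟩
        rcases (Language.mem_add _ _ v).1 h1 with h' | h'
        · exact (Language.mem_add _ _ v).2 (Or.inl (by rw [ihE]; exact ⟨h', h2⟩))
        · exact (Language.mem_add _ _ v).2 (Or.inr (by rw [ihF]; exact ⟨h', h2⟩))
  | comp E F ihE ihF =>
      ext v
      simp only [Rexp]
      constructor
      · intro h
        obtain ⟨x, hx, y, hy, rfl⟩ := Language.mem_mul.1 h
        rw [ihE] at hx
        rw [ihF] at hy
        refine ⟨Language.mem_mul.2 ⟨x, hx.1, y, hy.1, rfl⟩, ?_⟩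
        intro c hc b hb
        rcases List.mem_append.1 hc with h' | h'
        · exact hx.2 c h' b hb
        · exact hy.2 c h' b hb
      · rintro ⟨h1, h2⟩
        obtain ⟨x, hx, y, hy, rfl⟩ := Language.mem_mul.1 h1
        exact Language.mem_mul.2 ⟨x,
          by rw [ihE]; exact ⟨hx, fun c hc b hb => h2 c (List.mem_append_left _ hc) b hb⟩,
          y,
          by rw [ihF]; exact ⟨hy, fun c hc b hb => h2 c (List.mem_append_right _ hc) b hb⟩,
          rfl⟩
  | star E ih =>
      ext v
      simp only [Rexp]
      rw [RegularExpression.matches'_star, RegularExpression.matches'_star, ih]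
      constructor
      · intro h
        obtain ⟨ws, rfl, hws⟩ := Language.mem_kstar.1 h
        refine ⟨?_, ?_⟩
        · exact Language.mem_kstar.2 ⟨ws, rfl, fun y hy => (hws y hy).1⟩
        · intro c hc b hb
          obtain ⟨y, hy, hc'⟩ := List.mem_flatten.1 hc
          exact (hws y hy).2 c hc' b hb
      · rintro ⟨h1, h2⟩
        obtain ⟨ws, rfl, hws⟩ := Language.mem_kstar.1 h1
        refine Language.mem_kstar.2 ⟨ws, rfl, fun y hy => ?_⟩
        exact ⟨hws y hy, fun c hc b hb => h2 c (List.mem_flatten.2 ⟨y, hy, hc⟩) b hb⟩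

/-! ### Splitting occurrences -/

lemma split_occ : ∀ {x y v0 v1 : List α} {a : α}, x ++ y = v0 ++ a :: v1 →
    (∃ x1, x = v0 ++ a :: x1 ∧ v1 = x1 ++ y) ∨ (∃ y0, y = y0 ++ a :: v1 ∧ v0 = x ++ y0) := by
  intro x
  induction x with
  | nil =>
      intro y v0 v1 a h
      exact Or.inr ⟨v0, by simpa using h, by simp⟩
  | cons c x ih =>
      intro y v0 v1 a h
      cases v0 with
      | nil =>
          rw [List.cons_append, List.nil_append] at h
          injection h with h1 h2
          subst h1
          exact Or.inl ⟨x, by simp, h2.symm⟩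
      | cons d v0' =>
          rw [List.cons_append, List.cons_append] at h
          injection h with h1 h2
          subst h1
          rcases ih h2 with ⟨x1, rfl, rfl⟩ | ⟨y0, rfl, rfl⟩
          · exact Or.inl ⟨x1, rfl, rfl⟩
          · exact Or.inr ⟨y0, rfl, rfl⟩

lemma flatten_occ : ∀ (ws : List (List α)) {v0 v1 : List α} {a : α},
    ws.flatten = v0 ++ a :: v1 →
    ∃ ws1 w ws2 c0 c1, ws = ws1 ++ w :: ws2 ∧ w = c0 ++ a :: c1 ∧
      v0 = ws1.flatten ++ c0 ∧ v1 = c1 ++ ws2.flatten := by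
  intro ws
  induction ws with
  | nil =>
      intro v0 v1 a h
      exact absurd h (by simp)
  | cons w ws ih =>
      intro v0 v1 a h
      rw [List.flatten_cons] at h
      rcases split_occ h with ⟨x1, rfl, rfl⟩ | ⟨y0, hy, rfl⟩
      · exact ⟨[], _, ws, v0, x1, rfl, rfl, by simp, rfl⟩
      · obtain ⟨ws1, w', ws2, c0, c1, rfl, rfl, rfl, rfl⟩ := ih hy
        exact ⟨w :: ws1, _, ws2, c0, c1, rfl, rfl, by simp, rfl⟩

lemma append_singleton_iff {v0 v1 : List α} {x y : α} :
    v0 ++ x :: v1 = [y] ↔ v0 = [] ∧ x = y ∧ v1 = [] := by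
  cases v0 with
  | nil => simp
  | cons c v0' =>
      constructor
      · intro h
        rw [List.cons_append] at h
        injection h with h1 h2
        exact absurd h2 (by simp)
      · rintro ⟨h, -, -⟩
        exact absurd h (by simp)

/-! ### Brzozowski reordering derivative: regex-level correctness -/

lemma dexp_correct (hsym : Symmetric I) (a : α) (E : RegularExpression α) :
    (Dexp I a E).matches' = Da I a E.matches' := by
  induction E with
  | zero =>
      ext v
      constructor
      · exact fun h => h.elim
      · rintro ⟨v0, v1, h, -, -⟩
        exact h.elim
  | epsilon =>
      ext v
      constructor
      · exact fun h => h.elim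
      · rintro ⟨v0, v1, h, -, -⟩
        have h' : v0 ++ a :: v1 = [] := h
        exact absurd h' (by simp)
  | char b =>
      ext v
      simp only [Dexp]
      by_cases hab : a = b
      · subst hab
        rw [if_pos rfl]
        constructor
        · intro h
          have hv : v = [] := h
          exact ⟨[], [], rfl, hv, by simp⟩
        · rintro ⟨v0, v1, h, rfl, -⟩
          have h' : v0 ++ a :: v1 = [a] := h
          obtain ⟨rfl, -, rfl⟩ := append_singleton_iff.1 h'
          rfl
      · rw [if_neg hab]
        constructor
        · exact fun h => h.elim
        · rintro ⟨v0, v1, h, -, -⟩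
          have h' : v0 ++ a :: v1 = [b] := h
          obtain ⟨-, h2, -⟩ := append_singleton_iff.1 h'
          exact absurd h2 hab
  | plus E F ihE ihF =>
      ext v
      simp only [Dexp]
      constructor
      · intro h
        rcases (Language.mem_add _ _ v).1 h with h' | h'
        · rw [ihE] at h'
          obtain ⟨v0, v1, h1, h2, h3⟩ := h'
          exact ⟨v0, v1, (Language.mem_add _ _ _).2 (Or.inl h1), h2, h3⟩
        · rw [ihF] at h'
          obtain ⟨v0, v1, h1, h2, h3⟩ := h'
          exact ⟨v0, v1, (Language.mem_add _ _ _).2 (Or.inr h1), h2, h3⟩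
      · rintro ⟨v0, v1, h1, h2, h3⟩
        rcases (Language.mem_add _ _ _).1 h1 with h' | h'
        · exact (Language.mem_add _ _ v).2 (Or.inl (by rw [ihE]; exact ⟨v0, v1, h', h2, h3⟩))
        · exact (Language.mem_add _ _ v).2 (Or.inr (by rw [ihF]; exact ⟨v0, v1, h', h2, h3⟩))
  | comp E F ihE ihF =>
      ext v
      simp only [Dexp]
      constructor
      · intro h
        rcases (Language.mem_add _ _ v).1 h with h' | h'
        · obtain ⟨x, hx, y, hy, rfl⟩ := Language.mem_mul.1 h'
          rw [ihE] at hx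
          obtain ⟨v0, v1, h1, rfl, h3⟩ := hx
          exact ⟨v0, v1 ++ y, Language.mem_mul.2 ⟨v0 ++ a :: v1, h1, y, hy, by simp⟩,
            by simp, h3⟩
        · obtain ⟨x, hx, y, hy, rfl⟩ := Language.mem_mul.1 h'
          rw [rexp_correct hsym a E] at hx
          rw [ihF] at hy
          obtain ⟨v0, v1, h1, rfl, h3⟩ := hy
          refine ⟨x ++ v0, v1, Language.mem_mul.2 ⟨x, hx.1, v0 ++ a :: v1, h1,
            (List.append_assoc _ _ _).symm⟩, (List.append_assoc _ _ _).symm, ?_⟩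
          intro c hc
          rcases List.mem_append.1 hc with h' | h'
          · exact hx.2 c h' a (List.mem_cons_self)
          · exact h3 c h'
      · rintro ⟨v0, v1, h1, rfl, h3⟩
        obtain ⟨x, hx, y, hy, hxy⟩ := Language.mem_mul.1 h1
        rcases split_occ hxy with ⟨x1, rfl, rfl⟩ | ⟨y0, rfl, rfl⟩
        · exact (Language.mem_add _ _ _).2 (Or.inl (Language.mem_mul.2
            ⟨v0 ++ x1, by rw [ihE]; exact ⟨v0, x1, hx, rfl, h3⟩, y, hy,
              List.append_assoc _ _ _⟩))
        · refine (Language.mem_add _ _ _).2 (Or.inr (Language.mem_mul.2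
            ⟨x, ?_, y0 ++ v1,
              by rw [ihF]; exact ⟨y0, v1, hy, rfl, fun c hc => h3 c (List.mem_append_right _ hc)⟩,
              (List.append_assoc _ _ _).symm⟩))
          rw [rexp_correct hsym a E]
          refine ⟨hx, fun c hc b hb => ?_⟩
          rcases List.mem_cons.1 hb with rfl | h'
          · exact h3 c (List.mem_append_left _ hc)
          · exact absurd h' (List.not_mem_nil)
  | star E ih =>
      ext v
      simp only [Dexp]
      constructor
      · intro h
        obtain ⟨p, hp, q', hq', rfl⟩ := Language.mem_mul.1 h
        obtain ⟨q, hq, r, hr, rfl⟩ := Language.mem_mul.1 hq'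
        rw [RegularExpression.matches'_star, rexp_correct hsym a E] at hp
        obtain ⟨ps, rfl, hps⟩ := Language.mem_kstar.1 hp
        rw [ih] at hq
        obtain ⟨c0, c1, hcL, rfl, hc0⟩ := hq
        rw [RegularExpression.matches'_star] at hr
        obtain ⟨rs, rfl, hrs⟩ := Language.mem_kstar.1 hr
        refine ⟨ps.flatten ++ c0, c1 ++ rs.flatten, ?_, by simp, ?_⟩
        · rw [RegularExpression.matches'_star]
          refine Language.mem_kstar.2 ⟨ps ++ (c0 ++ a :: c1) :: rs, ?_, ?_⟩
          · simp [List.flatten_append]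
          · intro y hy
            rcases List.mem_append.1 hy with h' | h'
            · exact (hps y h').1
            · rcases List.mem_cons.1 h' with rfl | h''
              · exact hcL
              · exact hrs y h''
        · intro c hc
          rcases List.mem_append.1 hc with h' | h'
          · obtain ⟨y, hy, hc'⟩ := List.mem_flatten.1 h'
            exact (hps y hy).2 c hc' a (List.mem_cons_self)
          · exact hc0 c h'
      · rintro ⟨v0, v1, h1, rfl, h3⟩
        rw [RegularExpression.matches'_star] at h1
        obtain ⟨ws, hflat, hws⟩ := Language.mem_kstar.1 h1
        obtain ⟨ws1, w, ws2, c0, c1, rfl, rfl, rfl, rfl⟩ := flatten_occ _ hflat.symm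
        refine Language.mem_mul.2 ⟨ws1.flatten, ?_, (c0 ++ c1) ++ ws2.flatten,
          Language.mem_mul.2 ⟨c0 ++ c1, ?_, ws2.flatten, ?_, rfl⟩, by simp⟩
        · rw [RegularExpression.matches'_star, rexp_correct hsym a E]
          refine Language.mem_kstar.2 ⟨ws1, rfl, fun y hy => ⟨hws y (by simp [hy]), ?_⟩⟩
          intro c hc b hb
          rcases List.mem_cons.1 hb with rfl | h'
          · exact h3 c (List.mem_append_left _ (List.mem_flatten.2 ⟨y, hy, hc⟩))
          · exact absurd h' (List.not_mem_nil)
        · rw [ih]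
          exact ⟨c0, c1, hws _ (by simp), rfl, fun c hc => h3 c (List.mem_append_right _ hc)⟩
        · rw [RegularExpression.matches'_star]
          exact Language.mem_kstar.2 ⟨ws2, rfl, fun y hy => hws y (by simp [hy])⟩


end Stmt7Aux


/-- ⟦R_u E⟧ = R_u ⟦E⟧ and ⟦D_u E⟧ = D^I_u ⟦E⟧. -/
theorem stmt7 {α : Type u} [Fintype α] (I : α → α → Prop)
    (hirr : Irreflexive I) (hsym : Symmetric I) (E : RegularExpression α) (u : List α) :
    (RexpW I u E).matches' = RPart I u E.matches' ∧
    (DexpW I u E).matches' = RDeriv I u E.matches' := by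
  induction u using List.reverseRecOn with
  | nil =>
      refine ⟨?_, ?_⟩
      · exact (rpart_nil (I := I) E.matches').symm
      · exact (rderiv_nil (I := I) E.matches').symm
  | append_singleton u a ih =>
      have hR : RexpW I (u ++ [a]) E = Rexp I a (RexpW I u E) := by
        simp [RexpW, List.foldl_append]
      have hD : DexpW I (u ++ [a]) E = Dexp I a (DexpW I u E) := by
        simp [DexpW, List.foldl_append]
      refine ⟨?_, ?_⟩
      · exact (congrArg RegularExpression.matches' hR).trans ((rexp_correct hsym a _).trans ((congrArg (RPart I [a]) ih.1).trans (rpart_snoc u a _).symm))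
      · exact (congrArg RegularExpression.matches' hD).trans ((dexp_correct hsym a _).trans ((congrArg (Da I a) ih.2).trans (rderiv_snoc hsym u a _).symm))
end

section
/- The Antimirov reordering parts-of-derivatives collectively compute the semantic reordering derivative: for every regular expression E over Σ and every word u, D^I_u ⟦E⟧ = ⋃ {⟦E′⟧ | E →^{I*} (u, E′)}. -/
open RegularExpression
open scoped Classical

universe u

variable {α : Type u}

namespace StmtNine
variable {α : Type u} {I : α → α → Prop}

theorem treq_perm {u v : List α} (h : TrEq I u v) : u.Perm v := by
  induction h with
  | swap x y hab => exact ((List.Perm.swap _ _ _).append_left x).append_right y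
  | refl u => exact List.Perm.refl u
  | symm _ ih => exact ih.symm
  | trans _ _ ih1 ih2 => exact ih1.trans ih2

theorem treq_append_left {u v : List α} (w : List α) (h : TrEq I u v) :
    TrEq I (w ++ u) (w ++ v) := by
  induction h with
  | swap x y hab => simpa [List.append_assoc] using TrEq.swap (I := I) (w ++ x) y hab
  | refl u => exact TrEq.refl _
  | symm _ ih => exact ih.symm
  | trans _ _ ih1 ih2 => exact ih1.trans ih2

theorem treq_append_right {u v : List α} (w : List α) (h : TrEq I u v) :
    TrEq I (u ++ w) (v ++ w) := by
  induction h with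
  | swap x y hab => simpa [List.append_assoc] using TrEq.swap (I := I) x (y ++ w) hab
  | refl u => exact TrEq.refl _
  | symm _ ih => exact ih.symm
  | trans _ _ ih1 ih2 => exact ih1.trans ih2

theorem treq_cons {u v : List α} (c : α) (h : TrEq I u v) : TrEq I (c :: u) (c :: v) := by
  simpa using treq_append_left [c] h

theorem treq_comm {a : α} {u : List α} (h : ∀ b ∈ u, I a b) :
    TrEq I (a :: u) (u ++ [a]) := by
  induction u with
  | nil => exact TrEq.refl _
  | cons b u ih =>
      have h1 : TrEq I (a :: b :: u) (b :: a :: u) := by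
        simpa using TrEq.swap (I := I) [] u (h b (by simp))
      exact h1.trans (treq_cons b (ih (fun c hc => h c (by simp [hc]))))

/-- Extraction property. -/
def Ext (I : α → α → Prop) (a : α) (x x' : List α) : Prop :=
  ∀ p' q', x' = p' ++ a :: q' → (∀ b ∈ q', I a b) →
    ∃ p q, x = p ++ a :: q ∧ (∀ b ∈ q, I a b) ∧ TrEq I (p ++ q) (p' ++ q')

theorem ext_swap {a c d : α} {s t : List α} (hcd : I c d) :
    Ext I a (s ++ [c, d] ++ t) (s ++ [d, c] ++ t) := by
  intro p' q' heq hind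
  have heq' : s ++ (d :: c :: t) = p' ++ (a :: q') := by simpa [List.append_assoc] using heq
  rcases List.append_eq_append_iff.mp heq' with ⟨m, hm1, hm2⟩ | ⟨m, hm1, hm2⟩
  · -- p' = s ++ m, d::c::t = m ++ a :: q'
    subst hm1
    rcases m with _ | ⟨x1, _ | ⟨x2, m'⟩⟩
    · -- m = [] : d = a, q' = c :: t
      simp only [List.nil_append, List.cons.injEq] at hm2
      obtain ⟨rfl, rfl⟩ := hm2
      refine ⟨s ++ [c], t, by simp [List.append_assoc], fun b hb => hind b (by simp [hb]), ?_⟩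
      simp only [List.append_nil, List.append_assoc]
      exact TrEq.refl _
    · -- m = [x1] : x1 = d, c = a, q' = t
      simp only [List.cons_append, List.nil_append, List.cons.injEq] at hm2
      obtain ⟨rfl, rfl, rfl⟩ := hm2
      refine ⟨s, d :: t, by simp, ?_, ?_⟩
      · intro b hb
        rcases List.mem_cons.mp hb with rfl | hb
        · exact hcd
        · exact hind b hb
      · simp only [List.append_assoc]
        exact TrEq.refl _
    · -- m = x1 :: x2 :: m' : x1 = d, x2 = c, t = m' ++ a :: q'
      simp only [List.cons_append, List.cons.injEq] at hm2
      obtain ⟨rfl, rfl, rfl⟩ := hm2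
      refine ⟨s ++ c :: d :: m', q', by simp [List.append_assoc], hind, ?_⟩
      have := TrEq.swap (I := I) s (m' ++ q') hcd
      simpa [List.append_assoc] using this
  · -- s = p' ++ m, a :: q' = m ++ d :: c :: t
    subst hm1
    rcases m with _ | ⟨x1, m'⟩
    · -- m = [] : a = d, q' = c :: t
      simp only [List.nil_append, List.cons.injEq] at hm2
      obtain ⟨rfl, rfl⟩ := hm2
      refine ⟨p' ++ [c], t, by simp [List.append_assoc], fun b hb => hind b (by simp [hb]), ?_⟩
      simp only [List.append_nil, List.append_assoc]
      exact TrEq.refl _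
    · -- m = x1 :: m' : x1 = a, q' = m' ++ d :: c :: t
      simp only [List.cons_append, List.cons.injEq] at hm2
      obtain ⟨rfl, rfl⟩ := hm2
      refine ⟨p', m' ++ c :: d :: t, by simp [List.append_assoc], ?_, ?_⟩
      · intro b hb
        rcases List.mem_append.mp hb with hb | hb
        · exact hind b (by simp [hb])
        · rcases List.mem_cons.mp hb with rfl | hb
          · exact hind b (by simp)
          · rcases List.mem_cons.mp hb with rfl | hb
            · exact hind b (by simp)
            · exact hind b (by simp [hb])
      · have := TrEq.swap (I := I) (p' ++ m') t hcd
        simpa [List.append_assoc] using this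

theorem treq_ext {a : α} (hsym : Symmetric I) {x x' : List α} (h : TrEq I x x') :
    Ext I a x x' ∧ Ext I a x' x := by
  induction h with
  | @swap s t c d hcd => exact ⟨ext_swap hcd, ext_swap (hsym hcd)⟩
  | refl u =>
      refine ⟨?_, ?_⟩ <;>
        exact fun p' q' heq hind => ⟨p', q', heq, hind, TrEq.refl _⟩
  | symm _ ih => exact ⟨ih.2, ih.1⟩
  | trans _ _ ih1 ih2 =>
      constructor
      · intro p' q' heq hind
        obtain ⟨p1, q1, h1, hind1, ht1⟩ := ih2.1 p' q' heq hind
        obtain ⟨p2, q2, h2, hind2, ht2⟩ := ih1.1 p1 q1 h1 hind1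
        exact ⟨p2, q2, h2, hind2, ht2.trans ht1⟩
      · intro p' q' heq hind
        obtain ⟨p1, q1, h1, hind1, ht1⟩ := ih1.2 p' q' heq hind
        obtain ⟨p2, q2, h2, hind2, ht2⟩ := ih2.2 p1 q1 h1 hind1
        exact ⟨p2, q2, h2, hind2, ht2.trans ht1⟩

end StmtNine
namespace StmtNine

/-- Inductive characterization of scattering. -/
inductive Sc (I : α → α → Prop) : List α → List α → List α → Prop
  | nil : Sc I [] [] []
  | block {u z v : List α} (a : α) : Sc I u z v → Sc I (a :: u) (a :: z) v
  | res {u z v : List α} (a : α) : Sc I u z v → (∀ b ∈ u, I a b) → Sc I u (a :: z) (a :: v)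

variable {I : α → α → Prop}

theorem sc_nil_self (z : List α) : Sc I [] z z := by
  induction z with
  | nil => exact Sc.nil
  | cons a z ih => exact Sc.res a ih (by simp)

theorem sc_nil_inv {z v : List α} (h : Sc I [] z v) : z = v := by
  generalize hu : ([] : List α) = u0 at h
  induction h with
  | nil => rfl
  | block a _ _ => simp at hu
  | res a _ _ ih => rw [ih hu]

theorem sc_append_block {u z v : List α} (w : List α) (h : Sc I u z v) :
    Sc I (w ++ u) (w ++ z) v := by
  induction w with
  | nil => exact h
  | cons a w ih => exact Sc.block a ih

theorem sc_append_res {u z v : List α} (w : List α) (h : Sc I u z v)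
    (hw : ∀ a ∈ w, ∀ b ∈ u, I a b) : Sc I u (w ++ z) (w ++ v) := by
  induction w with
  | nil => exact h
  | cons a w ih =>
      exact Sc.res a (ih (fun a ha b hb => hw a (by simp [ha]) b hb))
        (fun b hb => hw a (by simp) b hb)

/- flatten-over-range helpers -/

theorem flatten_range_succ (f : ℕ → List α) (n : ℕ) :
    ((List.range (n + 1)).map f).flatten
      = f 0 ++ ((List.range n).map (fun i => f (i + 1))).flatten := by
  rw [List.range_succ_eq_map]
  simp only [List.map_cons, List.map_map, List.flatten_cons]
  rfl

theorem flatten_range_congr {f g : ℕ → List α} {n : ℕ} (h : ∀ i < n, f i = g i) :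
    ((List.range n).map f).flatten = ((List.range n).map g).flatten := by
  rw [List.map_congr_left (fun i hi => h i (List.mem_range.mp hi))]

def Bl (us : ℕ → List α) (n : ℕ) : List α := ((List.range n).map (fun i => us (i + 1))).flatten
def Vl (vs : ℕ → List α) (n : ℕ) : List α := ((List.range (n + 1)).map vs).flatten
def Zl (us vs : ℕ → List α) (n : ℕ) : List α :=
  vs 0 ++ ((List.range n).map (fun i => us (i + 1) ++ vs (i + 1))).flatten

theorem scatN_def {n : ℕ} {u z v : List α} :
    ScatN I n u z v ↔ ∃ us vs : ℕ → List α,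
      (∀ i, 1 ≤ i → i ≤ n → us i ≠ []) ∧
      (∀ j, 1 ≤ j → j ≤ n - 1 → vs j ≠ []) ∧
      u = Bl us n ∧ v = Vl vs n ∧ z = Zl us vs n ∧
      (∀ i j, 1 ≤ i → i ≤ n → j < i → WIndep I (vs j) (us i)) := Iff.rfl

theorem Bl_zero (us : ℕ → List α) : Bl us 0 = [] := by simp [Bl]
theorem Vl_zero (vs : ℕ → List α) : Vl vs 0 = vs 0 := by simp [Vl, List.range_succ]
theorem Zl_zero (us vs : ℕ → List α) : Zl us vs 0 = vs 0 := by simp [Zl]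

theorem Bl_succ (us : ℕ → List α) (n : ℕ) :
    Bl us (n + 1) = us 1 ++ Bl (fun i => us (i + 1)) n := by
  unfold Bl
  rw [flatten_range_succ]

theorem Vl_succ (vs : ℕ → List α) (n : ℕ) :
    Vl vs (n + 1) = vs 0 ++ Vl (fun j => vs (j + 1)) n := by
  unfold Vl
  rw [flatten_range_succ]

theorem Zl_succ (us vs : ℕ → List α) (n : ℕ) :
    Zl us vs (n + 1) = vs 0 ++ us 1 ++ Zl (fun i => us (i + 1)) (fun j => vs (j + 1)) n := by
  unfold Zl
  rw [flatten_range_succ]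
  simp [List.append_assoc]

theorem Bl_congr {us us' : ℕ → List α} {n : ℕ} (h : ∀ i, 1 ≤ i → i ≤ n → us i = us' i) :
    Bl us n = Bl us' n := by
  unfold Bl
  exact flatten_range_congr (fun i hi => h (i + 1) (by omega) (by omega))

theorem Vl_congr {vs vs' : ℕ → List α} {n : ℕ} (h : ∀ j ≤ n, vs j = vs' j) :
    Vl vs n = Vl vs' n := by
  unfold Vl
  exact flatten_range_congr (fun j hj => h j (by omega))

theorem Zl_congr {us us' vs vs' : ℕ → List α} {n : ℕ}
    (h1 : ∀ i, 1 ≤ i → i ≤ n → us i = us' i) (h2 : ∀ j ≤ n, vs j = vs' j) :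
    Zl us vs n = Zl us' vs' n := by
  unfold Zl
  rw [h2 0 (by omega), flatten_range_congr
    (fun i hi => by rw [h1 (i + 1) (by omega) (by omega), h2 (i + 1) (by omega)])]

theorem mem_Bl {us : ℕ → List α} {n i : ℕ} (h1 : 1 ≤ i) (h2 : i ≤ n) {b : α}
    (hb : b ∈ us i) : b ∈ Bl us n := by
  refine List.mem_flatten.mpr ⟨us i, ?_, hb⟩
  refine List.mem_map.mpr ⟨i - 1, List.mem_range.mpr (by omega), ?_⟩
  congr 1
  omega

theorem mem_Bl_elim {us : ℕ → List α} {n : ℕ} {b : α} (hb : b ∈ Bl us n) :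
    ∃ i, 1 ≤ i ∧ i ≤ n ∧ b ∈ us i := by
  obtain ⟨l, hl, hbl⟩ := List.mem_flatten.mp hb
  obtain ⟨i, hi, rfl⟩ := List.mem_map.mp hl
  exact ⟨i + 1, by omega, by have := List.mem_range.mp hi; omega, hbl⟩

/-- ScatN n implies Sc. -/
theorem scatn_sc : ∀ (n : ℕ) {u z v : List α}, ScatN I n u z v → Sc I u z v := by
  intro n
  induction n with
  | zero =>
      intro u z v h
      rw [scatN_def] at h
      obtain ⟨us, vs, -, -, hu, hv, hz, -⟩ := h
      rw [Bl_zero] at hu; rw [Vl_zero] at hv; rw [Zl_zero] at hz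
      subst hu; subst hv; subst hz
      exact sc_nil_self _
  | succ n ih =>
      intro u z v h
      rw [scatN_def] at h
      obtain ⟨us, vs, hne, hne', hu, hv, hz, hind⟩ := h
      rw [Bl_succ] at hu; rw [Vl_succ] at hv; rw [Zl_succ] at hz
      have h0 : ScatN I n (Bl (fun i => us (i + 1)) n)
          (Zl (fun i => us (i + 1)) (fun j => vs (j + 1)) n) (Vl (fun j => vs (j + 1)) n) := by
        rw [scatN_def]
        refine ⟨fun i => us (i + 1), fun j => vs (j + 1), ?_, ?_, rfl, rfl, rfl, ?_⟩
        · intro i h1 h2; exact hne (i + 1) (by omega) (by omega)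
        · intro j h1 h2; exact hne' (j + 1) (by omega) (by omega)
        · intro i j h1 h2 hj
          exact hind (i + 1) (j + 1) (by omega) (by omega) (by omega)
      have hsc := ih h0
      have hsc2 := sc_append_block (us 1) hsc
      have hw : ∀ a ∈ vs 0, ∀ b ∈ us 1 ++ Bl (fun i => us (i + 1)) n, I a b := by
        intro a ha b hb
        rcases List.mem_append.mp hb with hb | hb
        · exact hind 1 0 (by omega) (by omega) (by omega) a ha b hb
        · obtain ⟨i, hi1, hi2, hbi⟩ := mem_Bl_elim hb
          exact hind (i + 1) 0 (by omega) (by omega) (by omega) a ha b hbi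
      have hsc3 := sc_append_res (vs 0) hsc2 hw
      rw [hu, hv, hz]
      simpa [List.append_assoc] using hsc3

theorem scat0 (z : List α) : ScatN I 0 [] z z := by
  rw [scatN_def]
  refine ⟨fun _ => [], fun _ => z, ?_, ?_, ?_, ?_, ?_, ?_⟩
  · intro i h1 h2; omega
  · intro j h1 h2; omega
  · rw [Bl_zero]
  · rw [Vl_zero]
  · rw [Zl_zero]
  · intro i j h1 h2 hj; omega

theorem scat_res {n : ℕ} {a : α} {u z v : List α} (h : ScatN I n u z v)
    (ha : ∀ b ∈ u, I a b) : ScatN I n u (a :: z) (a :: v) := by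
  rw [scatN_def] at h ⊢
  obtain ⟨us, vs, hne, hne', hu, hv, hz, hind⟩ := h
  refine ⟨us, fun j => if j = 0 then a :: vs 0 else vs j, hne, ?_, hu, ?_, ?_, ?_⟩
  · intro j h1 h2; simp only [if_neg (by omega : ¬ j = 0)]; exact hne' j h1 h2
  · cases n with
    | zero => rw [Vl_zero] at hv ⊢; simp [hv]
    | succ n =>
        rw [Vl_succ] at hv ⊢
        simp only [if_pos rfl]
        rw [Vl_congr (vs' := fun j => vs (j + 1)) (fun j _ => by simp)]
        simp [hv]
  · unfold Zl at hz ⊢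
    simp only [if_pos rfl]
    rw [flatten_range_congr (g := fun i => us (i + 1) ++ vs (i + 1)) (fun i _ => by simp)]
    simp [hz]
  · intro i j h1 h2 hj
    by_cases hj0 : j = 0
    · subst hj0
      simp only [if_pos rfl]
      intro c hc b hb
      rcases List.mem_cons.mp hc with rfl | hc
      · exact ha b (hu ▸ mem_Bl h1 h2 hb)
      · exact hind i 0 h1 h2 (by omega) c hc b hb
    · simp only [if_neg hj0]
      exact hind i j h1 h2 hj

theorem scat_block {n : ℕ} {a : α} {u z v : List α} (h : ScatN I n u z v) :
    ∃ m, ScatN I m (a :: u) (a :: z) v := by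
  rw [scatN_def] at h
  obtain ⟨us, vs, hne, hne', hu, hv, hz, hind⟩ := h
  cases n with
  | zero =>
      rw [Bl_zero] at hu; rw [Vl_zero] at hv; rw [Zl_zero] at hz
      refine ⟨1, scatN_def.mpr ⟨fun _ => [a], fun j => if j = 0 then [] else vs 0,
        ?_, ?_, ?_, ?_, ?_, ?_⟩⟩
      · intro i _ _; simp
      · intro j h1 h2; omega
      · rw [Bl_succ, Bl_zero, hu]; rfl
      · rw [Vl_succ, Vl_zero]; simp [hv]
      · rw [Zl_succ, Zl_zero]; simp [hz]
      · intro i j h1 h2 hj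
        have : j = 0 := by omega
        subst this
        simp only [if_pos rfl]
        intro c hc; simp at hc
  | succ n =>
      by_cases h0 : vs 0 = []
      · -- extend the first block
        refine ⟨n + 1, scatN_def.mpr ⟨fun i => if i = 1 then a :: us 1 else us i, vs,
          ?_, hne', ?_, hv, ?_, ?_⟩⟩
        · intro i h1 h2
          by_cases hi : i = 1
          · subst hi; simp
          · simp only [if_neg hi]; exact hne i h1 h2
        · rw [Bl_succ] at hu ⊢
          simp only [if_pos rfl]
          rw [Bl_congr (us' := fun i => us (i + 1))
            (fun i h1 h2 => by simp only [if_neg (by omega : ¬ i + 1 = 1)])]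
          simp [hu]
        · rw [Zl_succ] at hz ⊢
          simp only [if_pos rfl]
          rw [Zl_congr (us' := fun i => us (i + 1)) (vs' := fun j => vs (j + 1))
            (fun i h1 h2 => by simp only [if_neg (by omega : ¬ i + 1 = 1)]) (fun j _ => rfl)]
          rw [hz, h0]
          simp
        · intro i j h1 h2 hj
          by_cases hi : i = 1
          · subst hi
            have : j = 0 := by omega
            subst this
            rw [h0]
            intro c hc; simp at hc
          · simp only [if_neg hi]
            exact hind i j h1 h2 hj
      · -- new singleton block in front
        refine ⟨n + 2, scatN_def.mpr ⟨fun i => if i = 1 then [a] else us (i - 1),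
          fun j => if j = 0 then [] else vs (j - 1), ?_, ?_, ?_, ?_, ?_, ?_⟩⟩
        · intro i h1 h2
          by_cases hi : i = 1
          · subst hi; simp
          · simp only [if_neg hi]
            exact hne (i - 1) (by omega) (by omega)
        · intro j h1 h2
          simp only [if_neg (by omega : ¬ j = 0)]
          by_cases hj : j = 1
          · subst hj; simpa using h0
          · exact hne' (j - 1) (by omega) (by omega)
        · rw [show n + 2 = (n + 1) + 1 from rfl, Bl_succ]
          simp only [if_pos rfl]
          rw [Bl_congr (us' := us) (fun i h1 h2 => by
            simp only [if_neg (by omega : ¬ i + 1 = 1)]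
            congr 1)]
          simp [hu]
        · rw [show n + 2 = (n + 1) + 1 from rfl, Vl_succ]
          simp only [if_pos rfl]
          rw [Vl_congr (vs' := vs) (fun j _ => by
            simp only [if_neg (by omega : ¬ j + 1 = 0)]
            congr 1)]
          simp [hv]
        · rw [show n + 2 = (n + 1) + 1 from rfl, Zl_succ]
          simp only [if_pos rfl, if_neg (by omega : ¬ (1:ℕ) = 0), if_neg (by omega : ¬ (2:ℕ) = 1)]
          rw [Zl_congr (us' := us) (vs' := vs)
            (fun i h1 h2 => by simp only [if_neg (by omega : ¬ i + 1 = 1)]; congr 1)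
            (fun j _ => by simp only [if_neg (by omega : ¬ j + 1 = 0)]; congr 1)]
          simp [hz]
        · intro i j h1 h2 hj
          by_cases hj0 : j = 0
          · subst hj0
            simp only [if_pos rfl]
            intro c hc; simp at hc
          · simp only [if_neg hj0, if_neg (by omega : ¬ i = 1)]
            exact hind (i - 1) (j - 1) (by omega) (by omega) (by omega)

theorem sc_scat {u z v : List α} (h : Sc I u z v) : Scat I u z v := by
  induction h with
  | nil => exact ⟨0, scat0 []⟩
  | block a _ ih =>
      obtain ⟨n, hn⟩ := ih
      exact scat_block hn
  | res a _ ha ih =>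
      obtain ⟨n, hn⟩ := ih
      exact ⟨n, scat_res hn ha⟩

theorem scat_iff_sc {u z v : List α} : Scat I u z v ↔ Sc I u z v :=
  ⟨fun ⟨n, hn⟩ => scatn_sc n hn, sc_scat⟩

end StmtNine
namespace StmtNine
variable {I : α → α → Prop}

theorem sc_single_inv {a : α} {z v : List α} (h : Sc I [a] z v) :
    ∃ v0 v1, z = v0 ++ a :: v1 ∧ v = v0 ++ v1 ∧ ∀ b ∈ v0, I b a := by
  generalize hu : [a] = u0 at h
  induction h with
  | nil => simp at hu
  | block c hsc ih =>
      rename_i u₀ z₀ v₀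
      obtain ⟨rfl, rfl⟩ : c = a ∧ u₀ = [] := by simpa using hu.symm
      exact ⟨[], v₀, by simp [sc_nil_inv hsc], rfl, by simp⟩
  | res c hsc hc ih =>
      obtain ⟨v0, v1, rfl, rfl, hi⟩ := ih hu
      subst hu
      refine ⟨c :: v0, v1, rfl, rfl, ?_⟩
      intro b hb
      rcases List.mem_cons.mp hb with rfl | hb
      · exact hc a (by simp)
      · exact hi b hb

theorem sc_single {a : α} {v0 v1 : List α} (hi : ∀ b ∈ v0, I b a) :
    Sc I [a] (v0 ++ a :: v1) (v0 ++ v1) := by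
  refine sc_append_res v0 (Sc.block a (sc_nil_self v1)) ?_
  intro c hc b hb
  rcases List.mem_cons.mp hb with rfl | hb
  · exact hi c hc
  · simp at hb

theorem sc_insert {u' z w : List α} (h : Sc I u' z w) :
    ∀ (a : α) (v0 v1 : List α), w = v0 ++ a :: v1 → (∀ b ∈ v0, I b a) →
    ∃ u'', TrEq I (u' ++ [a]) u'' ∧ Sc I u'' z (v0 ++ v1) := by
  induction h with
  | nil => intro a v0 v1 hw; simp at hw
  | block c hsc ih =>
      intro a v0 v1 hw hind
      obtain ⟨u'', ht, hs⟩ := ih a v0 v1 hw hind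
      exact ⟨c :: u'', by simpa using treq_cons c ht, Sc.block c hs⟩
  | @res u' z₀ w₀ c hsc hc ih =>
      intro a v0 v1 hw hind
      cases v0 with
      | nil =>
          simp only [List.nil_append, List.cons.injEq] at hw
          obtain ⟨rfl, rfl⟩ := hw
          exact ⟨c :: u', (treq_comm hc).symm, by simpa using Sc.block c hsc⟩
      | cons c' v0' =>
          simp only [List.cons_append, List.cons.injEq] at hw
          obtain ⟨rfl, rfl⟩ := hw
          obtain ⟨u'', ht, hs⟩ := ih a v0' v1 rfl (fun b hb => hind b (by simp [hb]))
          refine ⟨u'', ht, ?_⟩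
          have hmem : ∀ b ∈ u'', I c b := by
            intro b hb
            have hb' : b ∈ u' ++ [a] := (treq_perm ht).symm.subset hb
            rcases List.mem_append.mp hb' with hb' | hb'
            · exact hc b hb'
            · rcases List.mem_singleton.mp hb' with rfl
              exact hind c (by simp)
          simpa using Sc.res c hs hmem

theorem sc_remove {w' z v : List α} (h : Sc I w' z v) :
    ∀ (a : α) (p q : List α), w' = p ++ a :: q → (∀ b ∈ q, I a b) →
    ∃ v0 v1, Sc I (p ++ q) z (v0 ++ a :: v1) ∧ v = v0 ++ v1 ∧ ∀ b ∈ v0, I b a := by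
  induction h with
  | nil => intro a p q hw; simp at hw
  | @block u₀ z₀ v c hsc ih =>
      intro a p q hw hq
      cases p with
      | nil =>
          simp only [List.nil_append, List.cons.injEq] at hw
          obtain ⟨rfl, rfl⟩ := hw
          exact ⟨[], v, by simpa using Sc.res c hsc hq, rfl, by simp⟩
      | cons c' p' =>
          simp only [List.cons_append, List.cons.injEq] at hw
          obtain ⟨rfl, rfl⟩ := hw
          obtain ⟨v0, v1, hs, hv, hi⟩ := ih a p' q rfl hq
          exact ⟨v0, v1, Sc.block c hs, hv, hi⟩
  | @res u₀ z₀ v' c hsc hcw ih =>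
      intro a p q hw hq
      obtain ⟨v0, v1, hs, hv, hi⟩ := ih a p q hw hq
      refine ⟨c :: v0, v1, ?_, by simp [hv], ?_⟩
      · refine Sc.res c hs ?_
        intro b hb
        exact hcw b (hw ▸ (by rcases List.mem_append.mp hb with hb | hb <;> simp [hb]))
      · intro b hb
        rcases List.mem_cons.mp hb with rfl | hb
        · exact hcw a (hw ▸ (by simp))
        · exact hi b hb

theorem eqscat_iff {u z v : List α} :
    EqScat I u z v ↔ ∃ u', TrEq I u u' ∧ Sc I u' z v :=
  exists_congr fun _ => and_congr_right fun _ => scat_iff_sc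

theorem eqscat_snoc (hsym : Symmetric I) {u : List α} {a : α} {z v : List α} :
    EqScat I (u ++ [a]) z v ↔
      ∃ w, EqScat I u z w ∧ ∃ v0 v1, w = v0 ++ a :: v1 ∧ v = v0 ++ v1 ∧ ∀ b ∈ v0, I b a := by
  rw [eqscat_iff]
  constructor
  · rintro ⟨w', ht, hs⟩
    obtain ⟨p, q, rfl, hq, ht2⟩ :=
      (treq_ext (a := a) hsym ht).2 u [] (by simp) (by simp)
    obtain ⟨v0, v1, hs', hv, hi⟩ := sc_remove hs a p q rfl hq
    refine ⟨v0 ++ a :: v1, eqscat_iff.mpr ⟨p ++ q, ?_, hs'⟩, v0, v1, rfl, hv, hi⟩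
    exact (by simpa using ht2 : TrEq I (p ++ q) u).symm
  · rintro ⟨w, hw, v0, v1, rfl, rfl, hi⟩
    obtain ⟨u', ht, hs⟩ := eqscat_iff.mp hw
    obtain ⟨u'', ht2, hs2⟩ := sc_insert hs a v0 v1 rfl hi
    exact ⟨u'', (treq_append_right [a] ht).trans ht2, hs2⟩

/-- The one-letter reordering derivative, explicitly. -/
def D1 (I : α → α → Prop) (a : α) (L : Language α) : Language α :=
  {v | ∃ z ∈ L, ∃ v0 v1, z = v0 ++ a :: v1 ∧ v = v0 ++ v1 ∧ ∀ b ∈ v0, I b a}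

theorem mem_D1 {a : α} {L : Language α} {v : List α} :
    v ∈ D1 I a L ↔ ∃ z ∈ L, ∃ v0 v1, z = v0 ++ a :: v1 ∧ v = v0 ++ v1 ∧ ∀ b ∈ v0, I b a :=
  Iff.rfl

theorem rderiv_nil (L : Set (List α)) : RDeriv I [] L = L := by
  ext v
  constructor
  · rintro ⟨z, hz, u', ht, hs⟩
    have hu : u' = [] := (treq_perm ht).symm.eq_nil
    subst hu
    rwa [sc_nil_inv (scat_iff_sc.mp hs)] at hz
  · intro hv
    exact ⟨v, hv, [], TrEq.refl [], sc_scat (sc_nil_self v)⟩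

theorem rderiv_snoc (L : Set (List α)) (hsym : Symmetric I) (u : List α) (a : α) :
    RDeriv I (u ++ [a]) L = D1 I a (RDeriv I u L) := by
  ext v
  constructor
  · rintro ⟨z, hz, hsc⟩
    obtain ⟨w, hw, v0, v1, rfl, rfl, hi⟩ := (eqscat_snoc hsym).mp hsc
    exact ⟨v0 ++ a :: v1, ⟨z, hz, hw⟩, v0, v1, rfl, rfl, hi⟩
  · rintro ⟨w, ⟨z, hz, hw⟩, v0, v1, rfl, rfl, hi⟩
    exact ⟨z, hz, (eqscat_snoc hsym).mpr ⟨v0 ++ a :: v1, hw, v0, v1, rfl, rfl, hi⟩⟩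

end StmtNine
namespace StmtNine
open scoped Computability
variable {I : α → α → Prop}

theorem matches'_zero' : (zero : RegularExpression α).matches' = (0 : Language α) := rfl
theorem matches'_eps' : (epsilon : RegularExpression α).matches' = (1 : Language α) := rfl
theorem matches'_char' (a : α) : (char a).matches' = ({[a]} : Language α) := rfl
theorem matches'_plus' (E F : RegularExpression α) :
    (plus E F).matches' = E.matches' + F.matches' := rfl
theorem matches'_comp' (E F : RegularExpression α) :
    (comp E F).matches' = E.matches' * F.matches' := rfl
theorem matches'_star' (E : RegularExpression α) :
    (RegularExpression.star E).matches' = E.matches'∗ := rfl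

/-- Reorderable part of a language w.r.t. a single letter. -/
def RP (I : α → α → Prop) (a : α) (L : Language α) : Language α :=
  {v | v ∈ L ∧ ∀ b ∈ v, I b a}

theorem mem_add' {L M : Language α} {v : List α} : v ∈ L + M ↔ v ∈ L ∨ v ∈ M := Iff.rfl

theorem mem_RP {a : α} {L : Language α} {v : List α} :
    v ∈ RP I a L ↔ v ∈ L ∧ ∀ b ∈ v, I b a := Iff.rfl

theorem rexp_matches (hsym : Symmetric I) (a : α) (E : RegularExpression α) :
    (Rexp I a E).matches' = RP I a E.matches' := by
  induction E with
  | zero =>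
      ext v
      constructor
      · intro h; exact absurd h (Set.notMem_empty v)
      · intro h; exact absurd (mem_RP.mp h).1 (Set.notMem_empty v)
  | epsilon =>
      ext v
      simp only [show Rexp I a epsilon = epsilon from rfl, matches'_eps', mem_RP,
        Language.mem_one]
      constructor
      · rintro rfl; exact ⟨rfl, by simp⟩
      · rintro ⟨rfl, -⟩; rfl
  | char b =>
      by_cases h : I a b
      · ext v
        simp only [show Rexp I a (char b) = if I a b then char b else zero from rfl, if_pos h,
          matches'_char', mem_RP, Set.mem_singleton_iff]
        constructor
        · rintro rfl; exact ⟨rfl, by simpa using hsym h⟩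
        · rintro ⟨hv, -⟩; exact hv
      · have hre : Rexp I a (char b) = zero := by
          rw [show Rexp I a (char b) = if I a b then char b else zero from rfl, if_neg h]
        ext v
        rw [hre]
        constructor
        · intro hv; exact absurd hv (Set.notMem_empty v)
        · intro hv
          have hv1 : v = [b] := (mem_RP.mp hv).1
          have hb := (mem_RP.mp hv).2
          subst hv1
          exact absurd (hsym (by simpa using hb)) h
  | plus E F ihE ihF =>
      ext v
      constructor
      · intro hv
        rcases mem_add'.mp hv with hv | hv
        · obtain ⟨h1, h2⟩ := mem_RP.mp (ihE ▸ hv)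
          exact mem_RP.mpr ⟨mem_add'.mpr (Or.inl h1), h2⟩
        · obtain ⟨h1, h2⟩ := mem_RP.mp (ihF ▸ hv)
          exact mem_RP.mpr ⟨mem_add'.mpr (Or.inr h1), h2⟩
      · intro hv
        obtain ⟨h1, h2⟩ := mem_RP.mp hv
        rcases mem_add'.mp h1 with h1 | h1
        · exact mem_add'.mpr (Or.inl (show v ∈ (Rexp I a E).matches' by
            rw [ihE]; exact mem_RP.mpr ⟨h1, h2⟩))
        · exact mem_add'.mpr (Or.inr (show v ∈ (Rexp I a F).matches' by
            rw [ihF]; exact mem_RP.mpr ⟨h1, h2⟩))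
  | comp E F ihE ihF =>
      ext v
      simp only [show Rexp I a (comp E F) = comp (Rexp I a E) (Rexp I a F) from rfl,
        matches'_comp', Language.mem_mul, mem_RP]
      constructor
      · rintro ⟨x, hx, y, hy, rfl⟩
        rw [ihE] at hx; replace hx := mem_RP.mp hx
        rw [ihF] at hy; replace hy := mem_RP.mp hy
        refine ⟨⟨x, hx.1, y, hy.1, rfl⟩, ?_⟩
        intro b hb
        rcases List.mem_append.mp hb with hb | hb
        · exact hx.2 b hb
        · exact hy.2 b hb
      · rintro ⟨⟨x, hx, y, hy, rfl⟩, hi⟩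
        refine ⟨x, ?_, y, ?_, rfl⟩
        · rw [ihE]; exact mem_RP.mpr ⟨hx, fun b hb => hi b (by simp [hb])⟩
        · rw [ihF]; exact mem_RP.mpr ⟨hy, fun b hb => hi b (by simp [hb])⟩
  | star E ihE =>
      ext v
      simp only [show Rexp I a (RegularExpression.star E) = RegularExpression.star (Rexp I a E)
        from rfl, matches'_star', Language.mem_kstar, mem_RP]
      constructor
      · rintro ⟨ss, rfl, hss⟩
        have hss' : ∀ y ∈ ss, y ∈ E.matches' ∧ ∀ b ∈ y, I b a := by
          intro y hy
          have := hss y hy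
          rw [ihE] at this; exact mem_RP.mp this
        refine ⟨⟨ss, rfl, fun y hy => (hss' y hy).1⟩, ?_⟩
        intro b hb
        obtain ⟨l, hl, hbl⟩ := List.mem_flatten.mp hb
        exact (hss' l hl).2 b hbl
      · rintro ⟨⟨ss, rfl, hss⟩, hi⟩
        refine ⟨ss, rfl, fun y hy => ?_⟩
        rw [ihE]; refine mem_RP.mpr ?_
        exact ⟨hss y hy, fun b hb => hi b (List.mem_flatten.mpr ⟨y, hy, hb⟩)⟩

theorem append_eq_append_cons {x y v0 v1 : List α} {a : α} (h : x ++ y = v0 ++ a :: v1) :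
    (∃ w, x = v0 ++ a :: w ∧ v1 = w ++ y) ∨ (∃ w, v0 = x ++ w ∧ y = w ++ a :: v1) := by
  rcases List.append_eq_append_iff.mp h with ⟨m, hm1, hm2⟩ | ⟨m, hm1, hm2⟩
  · exact Or.inr ⟨m, hm1, hm2⟩
  · rcases m with _ | ⟨c, w⟩
    · simp only [List.append_nil] at hm1
      exact Or.inr ⟨[], by simp [hm1], by simpa using hm2.symm⟩
    · simp only [List.cons_append, List.cons.injEq] at hm2
      obtain ⟨rfl, rfl⟩ := hm2
      exact Or.inl ⟨w, hm1, rfl⟩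

theorem flatten_eq_append_cons {ss : List (List α)} {v0 v1 : List α} {a : α}
    (h : ss.flatten = v0 ++ a :: v1) :
    ∃ ss₁ x0 x1 ss₂, ss = ss₁ ++ (x0 ++ a :: x1) :: ss₂ ∧
      v0 = ss₁.flatten ++ x0 ∧ v1 = x1 ++ ss₂.flatten := by
  induction ss generalizing v0 with
  | nil => simp at h
  | cons x ss ih =>
      rw [List.flatten_cons] at h
      rcases append_eq_append_cons h with ⟨w, hx, hv1⟩ | ⟨w, hv0, hy⟩
      · exact ⟨[], v0, w, ss, by simp [hx], by simp, hv1⟩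
      · obtain ⟨ss₁, x0, x1, ss₂, hss, hw, hv1⟩ := ih hy
        exact ⟨x :: ss₁, x0, x1, ss₂, by simp [hss], by simp [hv0, hw, List.append_assoc], hv1⟩

theorem d1_zero (a : α) : D1 I a (0 : Language α) = 0 := by
  ext v
  constructor
  · rintro ⟨z, hz, -⟩; exact absurd hz (Set.notMem_empty z)
  · intro h; exact absurd h (Set.notMem_empty v)

theorem d1_eps (a : α) : D1 I a (1 : Language α) = 0 := by
  ext v
  constructor
  · rintro ⟨z, hz, v0, v1, rfl, -, -⟩
    replace hz : _ ∈ (1 : Language α) := hz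
    rw [Language.mem_one] at hz
    simp at hz
  · intro h; exact absurd h (Set.notMem_empty v)

theorem d1_add (a : α) (L M : Language α) : D1 I a (L + M) = D1 I a L + D1 I a M := by
  ext v
  rw [mem_D1, Language.mem_add, mem_D1, mem_D1]
  constructor
  · rintro ⟨z, hz, h⟩
    rw [Language.mem_add] at hz
    rcases hz with hz | hz
    · exact Or.inl ⟨z, hz, h⟩
    · exact Or.inr ⟨z, hz, h⟩
  · rintro (⟨z, hz, h⟩ | ⟨z, hz, h⟩)
    · exact ⟨z, Language.mem_add .. |>.mpr (Or.inl hz), h⟩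
    · exact ⟨z, Language.mem_add .. |>.mpr (Or.inr hz), h⟩

theorem d1_mul (a : α) (L M : Language α) :
    D1 I a (L * M) = D1 I a L * M + RP I a L * D1 I a M := by
  ext v
  rw [mem_D1, Language.mem_add, Language.mem_mul, Language.mem_mul]
  constructor
  · rintro ⟨z, hz, v0, v1, hzz, rfl, hi⟩
    obtain ⟨x, hx, y, hy, hxy⟩ := Language.mem_mul.mp hz
    rw [hzz] at hxy
    rcases append_eq_append_cons hxy with ⟨w, hx', hv1⟩ | ⟨w, hv0, hy'⟩
    · refine Or.inl ⟨v0 ++ w, mem_D1.mpr ⟨x, hx, v0, w, hx', rfl, hi⟩, y, hy, ?_⟩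
      rw [hv1]; simp [List.append_assoc]
    · refine Or.inr ⟨x, mem_RP.mpr ⟨hx, fun b hb => hi b (by simp [hv0, hb])⟩,
        w ++ v1, mem_D1.mpr ⟨y, hy, w, v1, hy', rfl, fun b hb => hi b (by simp [hv0, hb])⟩, ?_⟩
      rw [hv0]; simp [List.append_assoc]
  · rintro (⟨w, hw, y, hy, rfl⟩ | ⟨x, hx, w, hw, rfl⟩)
    · obtain ⟨x, hx, v0, v1, rfl, rfl, hi⟩ := mem_D1.mp hw
      exact ⟨(v0 ++ a :: v1) ++ y, Language.append_mem_mul hx hy,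
        v0, v1 ++ y, by simp [List.append_assoc], by simp [List.append_assoc], hi⟩
    · obtain ⟨hxL, hix⟩ := mem_RP.mp hx
      obtain ⟨y, hy, v0, v1, rfl, rfl, hi⟩ := mem_D1.mp hw
      refine ⟨x ++ (v0 ++ a :: v1), Language.append_mem_mul hxL hy,
        x ++ v0, v1, by simp [List.append_assoc], by simp [List.append_assoc], ?_⟩
      intro b hb
      rcases List.mem_append.mp hb with hb | hb
      · exact hix b hb
      · exact hi b hb

theorem d1_kstar (a : α) (L : Language α) :
    D1 I a (L∗ : Language α) = (RP I a L)∗ * (D1 I a L * L∗) := by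
  ext v
  constructor
  · rintro ⟨z, hz, v0, v1, hzz, rfl, hi⟩
    obtain ⟨ss, rfl, hss⟩ := Language.mem_kstar.mp hz
    obtain ⟨ss₁, x0, x1, ss₂, hsseq, hv0, hv1⟩ := flatten_eq_append_cons hzz
    refine Language.mem_mul.mpr ⟨ss₁.flatten, ?_, (x0 ++ x1) ++ ss₂.flatten,
      Language.mem_mul.mpr ⟨x0 ++ x1, ?_, ss₂.flatten, ?_, rfl⟩, ?_⟩
    · refine Language.mem_kstar.mpr ⟨ss₁, rfl, fun y hy => mem_RP.mpr
        ⟨hss y (by simp [hsseq, hy]), ?_⟩⟩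
      intro b hb
      exact hi b (by
        rw [hv0]
        exact List.mem_append.mpr (Or.inl (List.mem_flatten.mpr ⟨y, hy, hb⟩)))
    · refine mem_D1.mpr ⟨x0 ++ a :: x1, hss _ (by simp [hsseq]), x0, x1, rfl, rfl, ?_⟩
      intro b hb
      exact hi b (by rw [hv0]; exact List.mem_append.mpr (Or.inr hb))
    · exact Language.mem_kstar.mpr ⟨ss₂, rfl, fun y hy => hss y (by simp [hsseq, hy])⟩
    · rw [hv0, hv1]; simp [List.append_assoc]
  · intro hv
    obtain ⟨s, hs, w', hw', rfl⟩ := Language.mem_mul.mp hv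
    obtain ⟨w, hw, t, ht, rfl⟩ := Language.mem_mul.mp hw'
    obtain ⟨x, hx, x0, x1, rfl, rfl, hix⟩ := mem_D1.mp hw
    obtain ⟨ss₁, rfl, hss₁⟩ := Language.mem_kstar.mp hs
    obtain ⟨ss₂, rfl, hss₂⟩ := Language.mem_kstar.mp ht
    refine mem_D1.mpr ⟨(ss₁ ++ (x0 ++ a :: x1) :: ss₂).flatten,
      Language.mem_kstar.mpr ⟨_, rfl, ?_⟩,
      ss₁.flatten ++ x0, x1 ++ ss₂.flatten, by simp [List.append_assoc],
      by simp [List.append_assoc], ?_⟩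
    · intro y hy
      rcases List.mem_append.mp hy with hy | hy
      · exact (mem_RP.mp (hss₁ y hy)).1
      · rcases List.mem_cons.mp hy with rfl | hy
        · exact hx
        · exact hss₂ y hy
    · intro b hb
      rcases List.mem_append.mp hb with hb | hb
      · obtain ⟨l, hl, hbl⟩ := List.mem_flatten.mp hb
        exact (mem_RP.mp (hss₁ l hl)).2 b hbl
      · exact hix b hb

end StmtNine
namespace StmtNine
open scoped Computability
variable {I : α → α → Prop}

theorem antim_d1 (hsym : Symmetric I) (a : α) (E : RegularExpression α) :
    {v | ∃ E', Antim I E a E' ∧ v ∈ E'.matches'} = D1 I a E.matches' := by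
  induction E with
  | zero =>
      ext v
      constructor
      · rintro ⟨E', hA, -⟩; cases hA
      · intro hv
        rw [matches'_zero', d1_zero] at hv
        exact absurd hv (Set.notMem_empty v)
  | epsilon =>
      ext v
      constructor
      · rintro ⟨E', hA, -⟩; cases hA
      · intro hv
        rw [matches'_eps', d1_eps] at hv
        exact absurd hv (Set.notMem_empty v)
  | char b =>
      ext v
      constructor
      · rintro ⟨G, hA, hv⟩
        cases hA
        have hv' : v = [] := hv
        subst hv'
        exact mem_D1.mpr ⟨[a], rfl, [], [], rfl, rfl, by simp⟩
      · intro hv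
        obtain ⟨z, hz, v0, v1, hzeq, rfl, hi⟩ := mem_D1.mp hv
        have hzb : z = [b] := hz
        subst hzb
        cases v0 with
        | cons c v0' =>
            simp only [List.cons_append, List.cons.injEq] at hzeq
            exact absurd hzeq.2 (by simp)
        | nil =>
            simp only [List.nil_append, List.cons.injEq] at hzeq
            obtain ⟨rfl, rfl⟩ := hzeq
            exact ⟨epsilon, Antim.chr b, rfl⟩
  | plus E F ihE ihF =>
      ext v
      constructor
      · rintro ⟨G, hA, hv⟩
        rw [matches'_plus', d1_add]
        cases hA with
        | plusL h =>
            refine mem_add'.mpr (Or.inl ?_)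
            rw [← ihE]; exact ⟨_, h, hv⟩
        | plusR h =>
            refine mem_add'.mpr (Or.inr ?_)
            rw [← ihF]; exact ⟨_, h, hv⟩
      · intro hv
        rw [matches'_plus', d1_add] at hv
        rcases mem_add'.mp hv with hv | hv
        · rw [← ihE] at hv
          obtain ⟨E', hA, hv⟩ := hv
          exact ⟨E', Antim.plusL hA, hv⟩
        · rw [← ihF] at hv
          obtain ⟨F', hA, hv⟩ := hv
          exact ⟨F', Antim.plusR hA, hv⟩
  | comp E F ihE ihF =>
      ext v
      constructor
      · rintro ⟨G, hA, hv⟩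
        rw [matches'_comp', d1_mul]
        cases hA with
        | compL h =>
            rename_i E'
            rw [matches'_comp'] at hv
            obtain ⟨x, hx, y, hy, rfl⟩ := Language.mem_mul.mp hv
            have hx' : x ∈ D1 I a E.matches' := by rw [← ihE]; exact ⟨_, h, hx⟩
            exact mem_add'.mpr (Or.inl (Language.append_mem_mul hx' hy))
        | compR h =>
            rename_i F'
            rw [matches'_comp'] at hv
            obtain ⟨x, hx, y, hy, rfl⟩ := Language.mem_mul.mp hv
            rw [rexp_matches hsym] at hx
            have hy' : y ∈ D1 I a F.matches' := by rw [← ihF]; exact ⟨_, h, hy⟩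
            exact mem_add'.mpr (Or.inr (Language.append_mem_mul hx hy'))
      · intro hv
        rw [matches'_comp', d1_mul] at hv
        rcases mem_add'.mp hv with hv | hv
        · obtain ⟨x, hx, y, hy, rfl⟩ := Language.mem_mul.mp hv
          rw [← ihE] at hx
          obtain ⟨E', hA, hx⟩ := hx
          refine ⟨comp E' F, Antim.compL hA, ?_⟩
          rw [matches'_comp']
          exact Language.append_mem_mul hx hy
        · obtain ⟨x, hx, y, hy, rfl⟩ := Language.mem_mul.mp hv
          rw [← ihF] at hy
          obtain ⟨F', hA, hy⟩ := hy
          refine ⟨comp (Rexp I a E) F', Antim.compR hA, ?_⟩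
          rw [matches'_comp']
          refine Language.append_mem_mul ?_ hy
          rw [rexp_matches hsym]
          exact hx
  | star E ihE =>
      ext v
      constructor
      · rintro ⟨G, hA, hv⟩
        cases hA with
        | st h =>
            rename_i E'
            rw [matches'_comp', matches'_star', matches'_comp', matches'_star'] at hv
            obtain ⟨s, hs, w, hw, rfl⟩ := Language.mem_mul.mp hv
            obtain ⟨x, hx, t, ht, rfl⟩ := Language.mem_mul.mp hw
            rw [rexp_matches hsym] at hs
            have hx' : x ∈ D1 I a E.matches' := by rw [← ihE]; exact ⟨_, h, hx⟩
            rw [matches'_star', d1_kstar]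
            exact Language.append_mem_mul hs (Language.append_mem_mul hx' ht)
      · intro hv
        rw [matches'_star', d1_kstar] at hv
        obtain ⟨s, hs, w, hw, rfl⟩ := Language.mem_mul.mp hv
        obtain ⟨x, hx, t, ht, rfl⟩ := Language.mem_mul.mp hw
        rw [← ihE] at hx
        obtain ⟨E', hA, hx⟩ := hx
        refine ⟨comp (RegularExpression.star (Rexp I a E))
          (comp E' (RegularExpression.star E)), Antim.st hA, ?_⟩
        rw [matches'_comp', matches'_star', matches'_comp', matches'_star']
        refine Language.append_mem_mul ?_ (Language.append_mem_mul hx ht)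
        rw [rexp_matches hsym]
        exact hs

theorem snoc_inj {u v : List α} {a b : α} (h : u ++ [a] = v ++ [b]) : u = v ∧ a = b := by
  have h' := congrArg List.reverse h
  simp only [List.reverse_append, List.reverse_singleton, List.singleton_append,
    List.cons.injEq] at h'
  exact ⟨List.reverse_injective h'.2, h'.1⟩

theorem antimw_cases {E : RegularExpression α} {w : List α} {E'' : RegularExpression α}
    (h : AntimW I E w E'') :
    (w = [] ∧ E'' = E) ∨ ∃ u a E', w = u ++ [a] ∧ AntimW I E u E' ∧ Antim I E' a E'' := by
  cases h with
  | nil => exact Or.inl ⟨rfl, rfl⟩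
  | snoc h1 h2 => exact Or.inr ⟨_, _, _, rfl, h1, h2⟩

theorem antimw_nil_inv {E E' : RegularExpression α} (h : AntimW I E [] E') : E' = E := by
  rcases antimw_cases h with ⟨-, h⟩ | ⟨u, a, F, heq, -, -⟩
  · exact h
  · exact absurd heq.symm (by simp)

theorem antimw_snoc_inv {E : RegularExpression α} {u : List α} {a : α}
    {E'' : RegularExpression α} (h : AntimW I E (u ++ [a]) E'') :
    ∃ E', AntimW I E u E' ∧ Antim I E' a E'' := by
  rcases antimw_cases h with ⟨heq, -⟩ | ⟨u', a', E', heq, h1, h2⟩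
  · exact absurd heq (by simp)
  · obtain ⟨rfl, rfl⟩ := snoc_inj heq.symm
    exact ⟨E', h1, h2⟩

end StmtNine
/-- D^I_u ⟦E⟧ = ⋃ {⟦E′⟧ | E →^{I*} (u, E′)}. -/
theorem stmt9 {α : Type u} [Fintype α] (I : α → α → Prop)
    (hirr : Irreflexive I) (hsym : Symmetric I) (E : RegularExpression α) (u : List α) :
    RDeriv I u E.matches' = {v | ∃ E', AntimW I E u E' ∧ v ∈ E'.matches'} := by
  induction u using List.reverseRecOn with
  | nil =>
      rw [StmtNine.rderiv_nil (I := I) E.matches']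
      ext v
      constructor
      · intro hv
        exact ⟨E, AntimW.nil E, hv⟩
      · rintro ⟨E', hW, hv⟩
        rwa [StmtNine.antimw_nil_inv hW] at hv
  | append_singleton u a ih =>
      rw [StmtNine.rderiv_snoc E.matches' hsym u a, ih]
      ext v
      constructor
      · rintro ⟨z, ⟨E', hW, hz⟩, v0, v1, hzeq, hveq, hi⟩
        have hmem : v ∈ StmtNine.D1 I a E'.matches' :=
          StmtNine.mem_D1.mpr ⟨z, hz, v0, v1, hzeq, hveq, hi⟩
        rw [← StmtNine.antim_d1 hsym] at hmem
        obtain ⟨E'', hA, hv⟩ := hmem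
        exact ⟨E'', AntimW.snoc hW hA, hv⟩
      · rintro ⟨E'', hW, hv⟩
        obtain ⟨E', hW', hA⟩ := StmtNine.antimw_snoc_inv hW
        have hmem : v ∈ StmtNine.D1 I a E'.matches' := by
          rw [← StmtNine.antim_d1 hsym]
          exact ⟨E'', hA, hv⟩
        obtain ⟨z, hz, v0, v1, hzeq, hveq, hi⟩ := StmtNine.mem_D1.mp hmem
        exact ⟨z, ⟨E', hW', hz⟩, v0, v1, hzeq, hveq, hi⟩
end

section
/- If a language L over Σ is connected, then for every nonempty word u, R_u (D^I_u L) ⊆ {ε}. -/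
open RegularExpression
open scoped Classical

universe u

variable {α : Type u}

private lemma treq_perm' {I : α → α → Prop} {u v : List α} (h : TrEq I u v) : u.Perm v := by
  induction h with
  | swap x y hab =>
      rename_i a b
      have h1 : ([a, b] ++ y).Perm ([b, a] ++ y) := (List.Perm.swap b a []).append_right y
      simpa [List.append_assoc] using h1.append_left x
  | refl u => exact List.Perm.refl u
  | symm _ ih => exact ih.symm
  | trans _ _ ih1 ih2 => exact ih1.trans ih2

/-- if L is connected then for every nonempty u, R_u (D^I_u L) ⊆ {ε}. -/
theorem stmt11 {α : Type u} [Fintype α] (I : α → α → Prop)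
    (hirr : Irreflexive I) (hsym : Symmetric I) (L : Set (List α))
    (hconn : ∀ w ∈ L, WordConnected I w) (u : List α) (hu : u ≠ []) :
    RPart I u (RDeriv I u L) ⊆ {([] : List α)} := by
  rintro v ⟨⟨z, hzL, u', hTr, n, us, vs, husne, hvsne, hu', hveq, hzeq, hIlt⟩, hvIu⟩
  show v ∈ ({[]} : Set (List α))
  simp only [Set.mem_singleton_iff]
  by_contra hv0
  have hperm : u.Perm u' := treq_perm' hTr
  have hu'ne : u' ≠ [] := by
    intro h
    exact hu (List.Perm.eq_nil (h ▸ hperm))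
  have memz_us : ∀ i < n, ∀ c ∈ us (i+1), c ∈ z := by
    intro i hi c hc
    rw [hzeq]
    refine List.mem_append_right _ ?_
    exact List.mem_flatten.mpr ⟨_, List.mem_map.mpr ⟨i, List.mem_range.mpr hi, rfl⟩,
      List.mem_append_left _ hc⟩
  have memz_vs : ∀ j ≤ n, ∀ c ∈ vs j, c ∈ z := by
    intro j hj c hc
    rw [hzeq]
    cases j with
    | zero => exact List.mem_append_left _ hc
    | succ i =>
      refine List.mem_append_right _ ?_
      exact List.mem_flatten.mpr ⟨_, List.mem_map.mpr ⟨i,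
        List.mem_range.mpr (Nat.lt_of_succ_le hj), rfl⟩, List.mem_append_right _ hc⟩
  have memu' : ∀ i < n, ∀ c ∈ us (i+1), c ∈ u' := by
    intro i hi c hc
    rw [hu']
    exact List.mem_flatten.mpr ⟨_, List.mem_map.mpr ⟨i, List.mem_range.mpr hi, rfl⟩, hc⟩
  have memv : ∀ j ≤ n, ∀ c ∈ vs j, c ∈ v := by
    intro j hj c hc
    rw [hveq]
    exact List.mem_flatten.mpr ⟨_, List.mem_map.mpr ⟨j,
      List.mem_range.mpr (Nat.lt_succ_of_le hj), rfl⟩, hc⟩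
  have zmem : ∀ c ∈ z, c ∈ u' ∨ c ∈ v := by
    intro c hc
    rw [hzeq] at hc
    rcases List.mem_append.mp hc with h | h
    · exact Or.inr (memv 0 (Nat.zero_le n) c h)
    · obtain ⟨l, hl, hcl⟩ := List.mem_flatten.mp h
      obtain ⟨i, hi, rfl⟩ := List.mem_map.mp hl
      rcases List.mem_append.mp hcl with h' | h'
      · exact Or.inl (memu' i (List.mem_range.mp hi) c h')
      · exact Or.inr (memv (i+1) (Nat.succ_le_of_lt (List.mem_range.mp hi)) c h')
  have u'subz : ∀ c ∈ u', c ∈ z := by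
    intro c hc
    rw [hu'] at hc
    obtain ⟨l, hl, hcl⟩ := List.mem_flatten.mp hc
    obtain ⟨i, hi, rfl⟩ := List.mem_map.mp hl
    exact memz_us i (List.mem_range.mp hi) c hcl
  have vsubz : ∀ c ∈ v, c ∈ z := by
    intro c hc
    rw [hveq] at hc
    obtain ⟨l, hl, hcl⟩ := List.mem_flatten.mp hc
    obtain ⟨j, hj, rfl⟩ := List.mem_map.mp hl
    exact memz_vs j (Nat.lt_succ_iff.mp (List.mem_range.mp hj)) c hcl
  have step : ∀ i j : Fin z.length, (depGraph I z).Adj i j → z.get i ∈ u → z.get j ∈ u := by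
    intro i j hadj hi
    rcases zmem (z.get j) (List.mem_iff_get.mpr ⟨j, rfl⟩) with h | h
    · exact hperm.mem_iff.mpr h
    · exact absurd ⟨hsym (hvIu _ h _ hi), hvIu _ h _ hi⟩ hadj.2
  have walkstep : ∀ {i j : Fin z.length}, (depGraph I z).Walk i j →
      z.get i ∈ u → z.get j ∈ u := by
    intro i j p
    induction p with
    | nil => exact id
    | cons h _ ih => exact fun hi => ih (step _ _ h hi)
  obtain ⟨cu, hcu⟩ := List.exists_mem_of_ne_nil u' hu'ne
  obtain ⟨cv, hcv⟩ := List.exists_mem_of_ne_nil v hv0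
  obtain ⟨i₀, hi₀⟩ := List.mem_iff_get.mp (u'subz cu hcu)
  obtain ⟨j₀, hj₀⟩ := List.mem_iff_get.mp (vsubz cv hcv)
  obtain ⟨p⟩ := hconn z hzL i₀ j₀
  have hj0u : z.get j₀ ∈ u := walkstep p (by rw [hi₀]; exact hperm.mem_iff.mpr hcu)
  exact hirr cv (hvIu cv hcv cv (hj₀ ▸ hj0u))
end
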